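/- arXiv:2506.17273 — 4 statements merged into one kernel-verified Lean document; each statement's English description precedes it below -/
import Mathlib

section
/- Let X = (ℝ^d)^{K+1} be path space with variables (x_0, …, x_K), let r : X → (0, ∞) be measurable, let φ_0, φ_K : ℝ^d → (0, ∞) be measurable with Z := ∫ φ_0(x_0) r(x_0,…,x_K) φ_K(x_K) dx_0⋯dx_K ∈ (0, ∞), and set p*(x_0,…,x_K) := φ_0(x_0) r(x_0,…,x_K) φ_K(x_K)/Z. Denote by p_0 and p_K the marginal densities of p* in the coordinates x_0 and x_K respectively. Then for every probability density p on X whose x_0-marginal is p_0 and whose x_K-marginal is p_K, and for which all integrals below are finite, the Pythagorean decomposition KL(p‖r) = KL(p‖p*) + KL(p*‖r) holds. -/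
open MeasureTheory

section Helpers

lemma integral_cons_marg {E : Type*} [MeasureSpace E] [SigmaFinite (volume : Measure E)]
    {K : ℕ} (F : (Fin (K+1) → E) → ℝ) (hF : Integrable F) :
    ∫ x, F x = ∫ x0 : E, ∫ y : Fin K → E, F (Fin.cons x0 y) := by
  have h := (volume_preserving_piFinSuccAbove (fun _ : Fin (K+1) => E) 0).symm
  have hemb := (MeasurableEquiv.piFinSuccAbove (fun _ : Fin (K+1) => E) 0).symm.measurableEmbedding
  rw [← h.integral_comp hemb F]
  have hint : Integrable (fun z : E × (Fin K → E) =>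
      F ((MeasurableEquiv.piFinSuccAbove (fun _ : Fin (K+1) => E) 0).symm z)) :=
    (h.integrable_comp_emb hemb).2 hF
  rw [Measure.volume_eq_prod] at hint ⊢
  rw [integral_prod _ hint]
  simp [MeasurableEquiv.piFinSuccAbove_symm_apply, Fin.consEquiv, Fin.snocEquiv]

lemma integral_snoc_marg {E : Type*} [MeasureSpace E] [SigmaFinite (volume : Measure E)]
    {K : ℕ} (F : (Fin (K+1) → E) → ℝ) (hF : Integrable F) :
    ∫ x, F x = ∫ xK : E, ∫ y : Fin K → E, F (Fin.snoc y xK) := by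
  have h := (volume_preserving_piFinSuccAbove (fun _ : Fin (K+1) => E) (Fin.last K)).symm
  have hemb := (MeasurableEquiv.piFinSuccAbove (fun _ : Fin (K+1) => E)
    (Fin.last K)).symm.measurableEmbedding
  rw [← h.integral_comp hemb F]
  have hint : Integrable (fun z : E × (Fin K → E) =>
      F ((MeasurableEquiv.piFinSuccAbove (fun _ : Fin (K+1) => E) (Fin.last K)).symm z)) :=
    (h.integrable_comp_emb hemb).2 hF
  rw [Measure.volume_eq_prod] at hint ⊢
  rw [integral_prod _ hint]
  simp [MeasurableEquiv.piFinSuccAbove_symm_apply, Fin.consEquiv, Fin.snocEquiv]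

lemma marg_split_cons {E : Type*} [MeasureSpace E] [SigmaFinite (volume : Measure E)] {K : ℕ}
    (f : (Fin (K+1) → E) → ℝ) (hf : Integrable f)
    (u : E → ℝ) (hu : Measurable u) (C : ℝ) (hC : ∀ t, |u t| ≤ C)
    (m : E → ℝ) (hm : ∀ x0, (∫ y : Fin K → E, f (Fin.cons x0 y)) = m x0) :
    ∫ x, u (x 0) * f x = ∫ x0, u x0 * m x0 := by
  have hint : Integrable (fun x : Fin (K+1) → E => u (x 0) * f x) :=
    hf.bdd_mul ((hu.comp (measurable_pi_apply 0)).aestronglyMeasurable)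
      (c := C) (Filter.Eventually.of_forall fun x => by simpa [Real.norm_eq_abs] using hC (x 0))
  rw [integral_cons_marg _ hint]
  simp only [Fin.cons_zero]
  simp_rw [integral_const_mul, hm]

lemma marg_split_snoc {E : Type*} [MeasureSpace E] [SigmaFinite (volume : Measure E)] {K : ℕ}
    (f : (Fin (K+1) → E) → ℝ) (hf : Integrable f)
    (u : E → ℝ) (hu : Measurable u) (C : ℝ) (hC : ∀ t, |u t| ≤ C)
    (m : E → ℝ) (hm : ∀ xK, (∫ y : Fin K → E, f (Fin.snoc y xK)) = m xK) :
    ∫ x, u (x (Fin.last K)) * f x = ∫ xK, u xK * m xK := by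
  have hint : Integrable (fun x : Fin (K+1) → E => u (x (Fin.last K)) * f x) :=
    hf.bdd_mul ((hu.comp (measurable_pi_apply (Fin.last K))).aestronglyMeasurable)
      (c := C) (Filter.Eventually.of_forall fun x => by simpa [Real.norm_eq_abs] using hC (x (Fin.last K)))
  rw [integral_snoc_marg _ hint]
  simp only [Fin.snoc_last]
  simp_rw [integral_const_mul, hm]

lemma trunc_cases (n t : ℝ) (hn : 0 ≤ n) :
    (t ≤ n ∧ -n ≤ t ∧ max (min t n) (-n) = t) ∨ (n ≤ t ∧ max (min t n) (-n) = n) ∨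
      (t ≤ -n ∧ max (min t n) (-n) = -n) := by
  rcases le_total t n with h1 | h1
  · rcases le_total (-n) t with h2 | h2
    · exact Or.inl ⟨h1, h2, by rw [min_eq_left h1, max_eq_left h2]⟩
    · exact Or.inr (Or.inr ⟨h2, by rw [min_eq_left h1, max_eq_right h2]⟩)
  · exact Or.inr (Or.inl ⟨h1, by rw [min_eq_right h1, max_eq_left (by linarith)]⟩)

lemma trunc_sum_abs_le (n a b : ℝ) (hn : 0 ≤ n) :
    |max (min a n) (-n) + max (min b n) (-n)| ≤ 2 * |a + b| := by
  have habs1 := le_abs_self (a + b)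
  have habs2 := neg_abs_le (a + b)
  have habs3 := abs_nonneg (a + b)
  rw [abs_le]
  rcases trunc_cases n a hn with ⟨ha1, ha2, ha⟩ | ⟨ha1, ha⟩ | ⟨ha1, ha⟩ <;>
    rcases trunc_cases n b hn with ⟨hb1, hb2, hb⟩ | ⟨hb1, hb⟩ | ⟨hb1, hb⟩ <;>
    rw [ha, hb] <;> constructor <;> linarith

lemma trunc_tendsto (t : ℝ) :
    Filter.Tendsto (fun k : ℕ => max (min t (k : ℝ)) (-(k : ℝ))) Filter.atTop (nhds t) := by
  have h : ∀ᶠ k : ℕ in Filter.atTop, max (min t (k : ℝ)) (-(k : ℝ)) = t := by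
    filter_upwards [Filter.eventually_ge_atTop ⌈|t|⌉₊] with k hk
    have hk' : |t| ≤ (k : ℝ) := le_trans (Nat.le_ceil _) (by exact_mod_cast hk)
    rw [min_eq_left (le_trans (le_abs_self t) hk'),
      max_eq_left (by linarith [neg_abs_le t])]
  exact Filter.Tendsto.congr' (Filter.EventuallyEq.symm h) tendsto_const_nhds

end Helpers

/-- **Pythagorean decomposition for the Schrödinger bridge.** On path space
`X = (ℝ^d)^{K+1}` with reference `r > 0` and Gibbs potentials `φ₀, φ_K > 0`, let
`p*(x) := φ₀(x₀) r(x) φ_K(x_K) / Z` with `Z ∈ (0,∞)` the total integral, and let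
`p₀, p_K` be the `x₀`- and `x_K`-marginals of `p*`. Then every probability density `p`
on path space with `x₀`-marginal `p₀` and `x_K`-marginal `p_K`, for which all the
integrals involved are finite, satisfies `KL(p‖r) = KL(p‖p*) + KL(p*‖r)`. -/
theorem schrodinger_pythagorean_decomposition
    {d K : ℕ}
    (r : (Fin (K + 1) → Fin d → ℝ) → ℝ)
    (φ0 φK : (Fin d → ℝ) → ℝ)
    (hr : Measurable r) (hrpos : ∀ x, 0 < r x)
    (hφ0 : Measurable φ0) (hφ0pos : ∀ u, 0 < φ0 u)
    (hφK : Measurable φK) (hφKpos : ∀ u, 0 < φK u)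
    (Z : ℝ)
    (hZ : Z = ∫ x : Fin (K + 1) → Fin d → ℝ, φ0 (x 0) * r x * φK (x (Fin.last K)))
    (hZint : Integrable
      (fun x : Fin (K + 1) → Fin d → ℝ => φ0 (x 0) * r x * φK (x (Fin.last K))))
    (hZpos : 0 < Z)
    (pstar : (Fin (K + 1) → Fin d → ℝ) → ℝ)
    (hpstar : pstar = fun x => φ0 (x 0) * r x * φK (x (Fin.last K)) / Z)
    (p0 pK : (Fin d → ℝ) → ℝ)
    (hp0 : p0 = fun x0 => ∫ y : Fin K → Fin d → ℝ, pstar (Fin.cons x0 y))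
    (hpK : pK = fun xK => ∫ y : Fin K → Fin d → ℝ, pstar (Fin.snoc y xK))
    (p : (Fin (K + 1) → Fin d → ℝ) → ℝ)
    (hp : Measurable p) (hppos : ∀ x, 0 ≤ p x)
    (hpnorm : (∫ x, p x) = 1)
    (hpmarg0 : ∀ x0, (∫ y : Fin K → Fin d → ℝ, p (Fin.cons x0 y)) = p0 x0)
    (hpmargK : ∀ xK, (∫ y : Fin K → Fin d → ℝ, p (Fin.snoc y xK)) = pK xK)
    (h1 : Integrable (fun x => p x * Real.log (p x / r x)))
    (h2 : Integrable (fun x => p x * Real.log (p x / pstar x)))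
    (h3 : Integrable (fun x => pstar x * Real.log (pstar x / r x))) :
    (∫ x, p x * Real.log (p x / r x)) =
      (∫ x, p x * Real.log (p x / pstar x)) +
        ∫ x, pstar x * Real.log (pstar x / r x) := by
  classical
  -- basic facts
  have hpint : Integrable p := by
    by_contra hc
    rw [integral_undef hc] at hpnorm
    exact zero_ne_one hpnorm
  have hpsm : Measurable pstar := by
    rw [hpstar]
    exact (((hφ0.comp (measurable_pi_apply 0)).mul hr).mul
      (hφK.comp (measurable_pi_apply (Fin.last K)))).div_const Z
  have hpspos : ∀ x, 0 < pstar x := by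
    intro x
    rw [hpstar]
    exact div_pos (mul_pos (mul_pos (hφ0pos _) (hrpos x)) (hφKpos _)) hZpos
  have hpsint : Integrable pstar := by
    rw [hpstar]
    exact hZint.div_const Z
  -- the additive potential
  set a : (Fin d → ℝ) → ℝ := fun t => Real.log (φ0 t) with ha_def
  set b : (Fin d → ℝ) → ℝ := fun t => Real.log (φK t) - Real.log Z with hb_def
  set s : (Fin (K + 1) → Fin d → ℝ) → ℝ := fun x => a (x 0) + b (x (Fin.last K)) with hs_def
  have ham : Measurable a := Real.measurable_log.comp hφ0
  have hbm : Measurable b := (Real.measurable_log.comp hφK).sub measurable_const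
  -- log of pstar over r
  have hlogps : ∀ x, Real.log (pstar x) - Real.log (r x) = s x := by
    intro x
    rw [hpstar]
    rw [Real.log_div (mul_pos (mul_pos (hφ0pos _) (hrpos x)) (hφKpos _)).ne' hZpos.ne',
      Real.log_mul (mul_pos (hφ0pos _) (hrpos x)).ne' (hφKpos _).ne',
      Real.log_mul (hφ0pos _).ne' (hrpos x).ne']
    simp only [hs_def, ha_def, hb_def]
    ring
  -- pointwise identities
  have idp : ∀ x, p x * Real.log (p x / r x) - p x * Real.log (p x / pstar x)
      = p x * s x := by
    intro x
    rcases eq_or_lt_of_le (hppos x) with h0 | h0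
    · simp [← h0]
    · rw [Real.log_div h0.ne' (hrpos x).ne', Real.log_div h0.ne' (hpspos x).ne']
      rw [← hlogps x]
      ring
  have idps : ∀ x, pstar x * Real.log (pstar x / r x) = pstar x * s x := by
    intro x
    rw [Real.log_div (hpspos x).ne' (hrpos x).ne', hlogps x]
  -- integrability of the cross terms
  have hph : Integrable (fun x => p x * s x) := by
    have := h1.sub h2
    exact this.congr (Filter.Eventually.of_forall fun x => idp x)
  have hpsh : Integrable (fun x => pstar x * s x) := by
    exact h3.congr (Filter.Eventually.of_forall fun x => idps x)
  -- the key cancellation : ∫ p·s = ∫ pstar·s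
  have key : (∫ x, p x * s x) = ∫ x, pstar x * s x := by
    -- truncations
    set u : ℕ → (Fin d → ℝ) → ℝ := fun k t => max (min (a t) (k : ℝ)) (-(k : ℝ)) with hu_def
    set v : ℕ → (Fin d → ℝ) → ℝ := fun k t => max (min (b t) (k : ℝ)) (-(k : ℝ)) with hv_def
    have hum : ∀ k, Measurable (u k) := fun k => (ham.min measurable_const).max measurable_const
    have hvm : ∀ k, Measurable (v k) := fun k => (hbm.min measurable_const).max measurable_const
    have hub : ∀ k t, |u k t| ≤ (k : ℝ) := by
      intro k t
      rw [abs_le]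
      constructor
      · exact le_max_right _ _
      · exact max_le (min_le_right _ _) (neg_le_self (Nat.cast_nonneg k))
    have hvb : ∀ k t, |v k t| ≤ (k : ℝ) := by
      intro k t
      rw [abs_le]
      constructor
      · exact le_max_right _ _
      · exact max_le (min_le_right _ _) (neg_le_self (Nat.cast_nonneg k))
    -- each truncated integral is zero
    have hzero : ∀ k : ℕ, (∫ x, (u k (x 0) + v k (x (Fin.last K))) * (p x - pstar x)) = 0 := by
      intro k
      have e1 : (∫ x, u k (x 0) * p x) = ∫ x0, u k x0 * p0 x0 :=
        marg_split_cons p hpint (u k) (hum k) k (hub k) p0 hpmarg0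
      have e2 : (∫ x, u k (x 0) * pstar x) = ∫ x0, u k x0 * p0 x0 :=
        marg_split_cons pstar hpsint (u k) (hum k) k (hub k) p0
          (fun x0 => (congrFun hp0 x0).symm)
      have e3 : (∫ x, v k (x (Fin.last K)) * p x) = ∫ xK, v k xK * pK xK :=
        marg_split_snoc p hpint (v k) (hvm k) k (hvb k) pK hpmargK
      have e4 : (∫ x, v k (x (Fin.last K)) * pstar x) = ∫ xK, v k xK * pK xK :=
        marg_split_snoc pstar hpsint (v k) (hvm k) k (hvb k) pK
          (fun xK => (congrFun hpK xK).symm)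
      have i1 : Integrable (fun x => u k (x 0) * p x) :=
        hpint.bdd_mul (((hum k).comp (measurable_pi_apply 0)).aestronglyMeasurable)
          (c := k) (Filter.Eventually.of_forall fun x => by simpa [Real.norm_eq_abs] using hub k (x 0))
      have i2 : Integrable (fun x => u k (x 0) * pstar x) :=
        hpsint.bdd_mul (((hum k).comp (measurable_pi_apply 0)).aestronglyMeasurable)
          (c := k) (Filter.Eventually.of_forall fun x => by simpa [Real.norm_eq_abs] using hub k (x 0))
      have i3 : Integrable (fun x => v k (x (Fin.last K)) * p x) :=
        hpint.bdd_mul (((hvm k).comp (measurable_pi_apply (Fin.last K))).aestronglyMeasurable)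
          (c := k) (Filter.Eventually.of_forall fun x => by simpa [Real.norm_eq_abs] using hvb k (x (Fin.last K)))
      have i4 : Integrable (fun x => v k (x (Fin.last K)) * pstar x) :=
        hpsint.bdd_mul (((hvm k).comp (measurable_pi_apply (Fin.last K))).aestronglyMeasurable)
          (c := k) (Filter.Eventually.of_forall fun x => by simpa [Real.norm_eq_abs] using hvb k (x (Fin.last K)))
      have expand : (fun x => (u k (x 0) + v k (x (Fin.last K))) * (p x - pstar x))
          = fun x => (u k (x 0) * p x - u k (x 0) * pstar x)
            + (v k (x (Fin.last K)) * p x - v k (x (Fin.last K)) * pstar x) := by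
        funext x; ring
      have j1 : Integrable (fun x : Fin (K + 1) → Fin d → ℝ =>
          u k (x 0) * p x - u k (x 0) * pstar x) := i1.sub i2
      have j2 : Integrable (fun x : Fin (K + 1) → Fin d → ℝ =>
          v k (x (Fin.last K)) * p x - v k (x (Fin.last K)) * pstar x) := i3.sub i4
      rw [expand, integral_add j1 j2, integral_sub i1 i2, integral_sub i3 i4, e1, e2, e3, e4]
      ring
    -- dominated convergence
    set W : (Fin (K + 1) → Fin d → ℝ) → ℝ := fun x => s x * (p x - pstar x) with hW_def
    have hWeq : W = fun x => p x * s x - pstar x * s x := by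
      funext x; simp only [hW_def]; ring
    have hWint : Integrable W := by
      rw [hWeq]; exact hph.sub hpsh
    have hWzero : (∫ x, W x) = 0 := by
      have hF : ∀ k : ℕ, AEStronglyMeasurable
          (fun x => (u k (x 0) + v k (x (Fin.last K))) * (p x - pstar x)) volume := by
        intro k
        exact ((((hum k).comp (measurable_pi_apply 0)).add
          ((hvm k).comp (measurable_pi_apply (Fin.last K)))).mul
          (hp.sub hpsm)).aestronglyMeasurable
      have hbound : Integrable (fun x => 2 * |W x|) := (hWint.abs).const_mul 2
      have hle : ∀ k : ℕ, ∀ᵐ x, ‖(u k (x 0) + v k (x (Fin.last K))) * (p x - pstar x)‖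
          ≤ 2 * |W x| := by
        intro k
        refine Filter.Eventually.of_forall fun x => ?_
        rw [Real.norm_eq_abs, abs_mul, hW_def]
        have := trunc_sum_abs_le (k : ℝ) (a (x 0)) (b (x (Fin.last K))) (by positivity)
        calc |u k (x 0) + v k (x (Fin.last K))| * |p x - pstar x|
            ≤ 2 * |a (x 0) + b (x (Fin.last K))| * |p x - pstar x| :=
              mul_le_mul_of_nonneg_right this (abs_nonneg _)
          _ = 2 * |s x * (p x - pstar x)| := by
              rw [abs_mul, hs_def]; ring
      have hlim : ∀ᵐ x, Filter.Tendsto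
          (fun k : ℕ => (u k (x 0) + v k (x (Fin.last K))) * (p x - pstar x))
          Filter.atTop (nhds (W x)) := by
        refine Filter.Eventually.of_forall fun x => ?_
        exact ((trunc_tendsto (a (x 0))).add (trunc_tendsto (b (x (Fin.last K))))).mul_const _
      have := tendsto_integral_of_dominated_convergence (fun x => 2 * |W x|) hF hbound hle hlim
      have hconst : (fun k : ℕ => ∫ x,
          (u k (x 0) + v k (x (Fin.last K))) * (p x - pstar x)) = fun _ => (0 : ℝ) :=
        funext hzero
      rw [hconst] at this
      exact tendsto_nhds_unique this tendsto_const_nhds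
    have hsub : (∫ x, p x * s x) - ∫ x, pstar x * s x = 0 := by
      rw [← integral_sub hph hpsh,
        show (fun x => p x * s x - pstar x * s x) = W from hWeq.symm]
      exact hWzero
    linarith
  -- conclusion
  have e1 : (∫ x, p x * Real.log (p x / r x)) - (∫ x, p x * Real.log (p x / pstar x))
      = ∫ x, p x * s x := by
    rw [← integral_sub h1 h2]
    exact integral_congr_ae (Filter.Eventually.of_forall fun x => idp x)
  have e2 : (∫ x, pstar x * Real.log (pstar x / r x)) = ∫ x, pstar x * s x :=
    integral_congr_ae (Filter.Eventually.of_forall fun x => idps x)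
  linarith [key, e1, e2]
end

section
/- Let X = (ℝ^d)^{K+1}, let r : X → (0, ∞) be measurable, let φ_0, φ_K : ℝ^d → (0, ∞) be measurable with Z := ∫ φ_0(x_0) r(x_0,…,x_K) φ_K(x_K) dx_0⋯dx_K ∈ (0, ∞), and set p* := φ_0 · r · φ_K / Z. Denote by p_0 and p_K the x_0- and x_K-marginals of p*. Then p* is the unique (up to Lebesgue-a.e. equality) minimizer of p ↦ KL(p‖r) over all probability densities p on X with x_0-marginal p_0, x_K-marginal p_K, and KL(p‖r) finite. -/
open MeasureTheory Set

lemma layer_cake_aux {X : Type*} [MeasurableSpace X] (μ : Measure X) [IsFiniteMeasure μ]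
    {U V : X → ℝ} (hU : Measurable U) (hV : Measurable V) :
    (∫⁻ x, ENNReal.ofReal (U x - V x) ∂μ)
      = ∫⁻ t : ℝ, μ {x | V x ≤ t ∧ t < U x} := by
  have hs : MeasurableSet {z : X × ℝ | V z.1 ≤ z.2 ∧ z.2 < U z.1} :=
    (measurableSet_le (hV.comp measurable_fst) measurable_snd).inter
      (measurableSet_lt measurable_snd (hU.comp measurable_fst))
  have key : ∀ x, ENNReal.ofReal (U x - V x)
      = ∫⁻ t : ℝ, ({z : X × ℝ | V z.1 ≤ z.2 ∧ z.2 < U z.1}).indicator 1 (x, t) := by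
    intro x
    calc ENNReal.ofReal (U x - V x) = volume (Ico (V x) (U x)) := Real.volume_Ico.symm
      _ = ∫⁻ t : ℝ, (Ico (V x) (U x)).indicator 1 t :=
          (lintegral_indicator_one measurableSet_Ico).symm
      _ = _ := by
          apply lintegral_congr; intro t
          simp only [Set.indicator_apply, Set.mem_Ico, Set.mem_setOf_eq, Pi.one_apply]
  simp_rw [key]
  have hmeas : AEMeasurable
      (Function.uncurry fun (x : X) (t : ℝ) =>
        ({z : X × ℝ | V z.1 ≤ z.2 ∧ z.2 < U z.1}).indicator (1 : X × ℝ → ENNReal) (x, t)) (μ.prod (volume : Measure ℝ)) := by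
    have : (Function.uncurry fun (x : X) (t : ℝ) =>
        ({z : X × ℝ | V z.1 ≤ z.2 ∧ z.2 < U z.1}).indicator (1 : X × ℝ → ENNReal) (x, t))
        = ({z : X × ℝ | V z.1 ≤ z.2 ∧ z.2 < U z.1}).indicator (1 : X × ℝ → ENNReal) := by
      funext z; cases z; rfl
    rw [this]
    exact (measurable_one.indicator hs).aemeasurable
  rw [lintegral_lintegral_swap hmeas]
  apply lintegral_congr
  intro t
  have h2 : ∀ x : X, ({z : X × ℝ | V z.1 ≤ z.2 ∧ z.2 < U z.1}).indicator (1 : X × ℝ → ENNReal) (x, t)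
      = ({x : X | V x ≤ t ∧ t < U x}).indicator (1 : X → ENNReal) x := by
    intro x
    simp only [Set.indicator_apply, Set.mem_setOf_eq, Pi.one_apply]
  simp_rw [h2]
  exact lintegral_indicator_one
    ((measurableSet_le hV measurable_const).inter (measurableSet_lt measurable_const hU))

lemma four_integral_identity {X : Type*} [MeasurableSpace X] (P Q : Measure X)
    [IsFiniteMeasure P] [IsFiniteMeasure Q]
    {U V : X → ℝ} (hU : Measurable U) (hV : Measurable V)
    (hmU : ∀ t : ℝ, P {x | t < U x} = Q {x | t < U x})
    (hmV : ∀ t : ℝ, P {x | t < V x} = Q {x | t < V x}) :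
    (∫⁻ x, ENNReal.ofReal (U x - V x) ∂P) + (∫⁻ x, ENNReal.ofReal (V x - U x) ∂Q)
      = (∫⁻ x, ENNReal.ofReal (V x - U x) ∂P) + (∫⁻ x, ENNReal.ofReal (U x - V x) ∂Q) := by
  rw [layer_cake_aux P hU hV, layer_cake_aux Q hU hV, layer_cake_aux P hV hU,
    layer_cake_aux Q hV hU]
  have hsecmeas : ∀ (W W' : X → ℝ), Measurable W → Measurable W' →
      Measurable (fun t : ℝ => P {x | W x ≤ t ∧ t < W' x}) := by
    intro W W' hW hW'
    have hs : MeasurableSet {z : X × ℝ | W z.1 ≤ z.2 ∧ z.2 < W' z.1} :=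
      (measurableSet_le (hW.comp measurable_fst) measurable_snd).inter
        (measurableSet_lt measurable_snd (hW'.comp measurable_fst))
    have := measurable_measure_prodMk_right (μ := P) hs
    exact this
  rw [← lintegral_add_left (hsecmeas V U hV hU), ← lintegral_add_left (hsecmeas U V hU hV)]
  apply lintegral_congr
  intro t
  -- pointwise identity between measures of difference sets
  set A := {x | t < U x} with hA
  set B := {x | t < V x} with hB
  have hAm : MeasurableSet A := measurableSet_lt measurable_const hU
  have hBm : MeasurableSet B := measurableSet_lt measurable_const hV
  have hset1 : ∀ (μ : Measure X), μ {x | V x ≤ t ∧ t < U x} = μ (A \ B) := by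
    intro μ; congr 1; ext x
    simp [hA, hB, Set.mem_setOf_eq, Set.mem_diff, not_lt, and_comm]
  have hset2 : ∀ (μ : Measure X), μ {x | U x ≤ t ∧ t < V x} = μ (B \ A) := by
    intro μ; congr 1; ext x
    simp [hA, hB, Set.mem_setOf_eq, Set.mem_diff, not_lt, and_comm]
  rw [hset1 P, hset1 Q, hset2 P, hset2 Q]
  have key : ∀ (μ : Measure X) (_ : IsFiniteMeasure μ),
      μ (A \ B) + μ B = μ (B \ A) + μ A := by
    intro μ _
    have h1 : μ (A \ B) + μ B = μ (A ∪ B) := by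
      rw [← measure_union (disjoint_sdiff_left) hBm, Set.diff_union_self]
    have h2 : μ (B \ A) + μ A = μ (B ∪ A) := by
      rw [← measure_union (disjoint_sdiff_left) hAm, Set.diff_union_self]
    rw [h1, h2, Set.union_comm]
  have e1 := key P inferInstance
  have e2 := key Q inferInstance
  have hPA : P A = Q A := hmU t
  have hPB : P B = Q B := hmV t
  -- goal : P (A \ B) + Q (B \ A) = P (B \ A) + Q (A \ B)
  have hfin : P B ≠ ⊤ := measure_ne_top _ _
  have e2' : Q (A \ B) + P B = Q (B \ A) + P A := by rw [hPA, hPB]; exact e2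
  -- add and cancel
  have : P B + (P (A \ B) + Q (B \ A)) = P B + (P (B \ A) + Q (A \ B)) := by
    calc P B + (P (A \ B) + Q (B \ A))
        = (P (A \ B) + P B) + Q (B \ A) := by ring
      _ = (P (B \ A) + P A) + Q (B \ A) := by rw [e1]
      _ = P (B \ A) + (Q (B \ A) + P A) := by ring
      _ = P (B \ A) + (Q (A \ B) + P B) := by rw [← e2']
      _ = P B + (P (B \ A) + Q (A \ B)) := by ring
  exact (ENNReal.add_right_inj hfin).mp this

lemma marginal_lintegral_eq {d K : ℕ} (i : Fin (K + 1))
    (p q : (Fin (K + 1) → Fin d → ℝ) → ℝ)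
    (hpm : Measurable p) (hqm : Measurable q)
    (hp0 : ∀ x, 0 ≤ p x) (hq0 : ∀ x, 0 ≤ q x)
    (hpi : Integrable p) (hqi : Integrable q)
    (hmarg : ∀ z : Fin d → ℝ,
      (∫ y : Fin K → Fin d → ℝ, p (Fin.insertNth i z y))
        = ∫ y : Fin K → Fin d → ℝ, q (Fin.insertNth i z y))
    {H : (Fin d → ℝ) → ENNReal} (hH : Measurable H) :
    ∫⁻ x, ENNReal.ofReal (p x) * H (x i) = ∫⁻ x, ENNReal.ofReal (q x) * H (x i) := by
  classical
  let e := MeasurableEquiv.piFinSuccAbove (fun _ : Fin (K + 1) => (Fin d → ℝ)) i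
  have mp : MeasurePreserving e (volume : Measure (Fin (K + 1) → Fin d → ℝ))
      ((volume : Measure (Fin d → ℝ)).prod (volume : Measure (Fin K → Fin d → ℝ))) := by
    rw [(volume_pi : (volume : Measure (Fin (K + 1) → Fin d → ℝ)) = _),
      (volume_pi : (volume : Measure (Fin K → Fin d → ℝ)) = _)]
    exact measurePreserving_piFinSuccAbove (fun _ => (volume : Measure (Fin d → ℝ))) i
  have hsymm : ∀ (z : Fin d → ℝ) (y : Fin K → Fin d → ℝ),
      e.symm (z, y) = Fin.insertNth i z y := by
    intro z y
    funext j
    rw [MeasurableEquiv.piFinSuccAbove_symm_apply]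
    exact Fin.insertNthEquiv_apply (fun _ : Fin (K + 1) => (Fin d → ℝ)) i (z, y) j
  have main : ∀ (f : (Fin (K + 1) → Fin d → ℝ) → ℝ), Measurable f → (∀ x, 0 ≤ f x) →
      Integrable f → ∫⁻ x, ENNReal.ofReal (f x) * H (x i)
        = ∫⁻ z : Fin d → ℝ, H z
            * ENNReal.ofReal (∫ y : Fin K → Fin d → ℝ, f (Fin.insertNth i z y)) := by
    intro f hfm hf0 hfi
    have hg : Measurable fun w : (Fin d → ℝ) × (Fin K → Fin d → ℝ) =>
        ENNReal.ofReal (f (e.symm w)) * H w.1 :=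
      ((hfm.comp e.symm.measurable).ennreal_ofReal).mul (hH.comp measurable_fst)
    have step1 : ∫⁻ x, ENNReal.ofReal (f x) * H (x i)
        = ∫⁻ w : (Fin d → ℝ) × (Fin K → Fin d → ℝ),
            ENNReal.ofReal (f (e.symm w)) * H w.1
            ∂((volume : Measure (Fin d → ℝ)).prod (volume : Measure (Fin K → Fin d → ℝ))) := by
      rw [← mp.lintegral_comp hg]
      apply lintegral_congr
      intro x
      have h1 : e.symm (e x) = x := e.symm_apply_apply x
      rw [h1]
      rfl
    rw [step1, lintegral_prod _ hg.aemeasurable]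
    have slice_int : ∀ᵐ z : Fin d → ℝ,
        Integrable (fun y : Fin K → Fin d → ℝ => f (e.symm (z, y))) := by
      have h3 : Integrable (fun w : (Fin d → ℝ) × (Fin K → Fin d → ℝ) => f (e.symm w))
          ((volume : Measure (Fin d → ℝ)).prod (volume : Measure (Fin K → Fin d → ℝ))) :=
        ((MeasurePreserving.symm e mp).integrable_comp hfi.aestronglyMeasurable).mpr hfi
      exact h3.prod_right_ae
    apply lintegral_congr_ae
    filter_upwards [slice_int] with z hz
    have hmy : Measurable fun y : Fin K → Fin d → ℝ => ENNReal.ofReal (f (e.symm (z, y))) :=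
      (hfm.comp (e.symm.measurable.comp measurable_prodMk_left)).ennreal_ofReal
    have heq : ∫⁻ y : Fin K → Fin d → ℝ, ENNReal.ofReal (f (e.symm (z, y)))
        = ENNReal.ofReal (∫ y : Fin K → Fin d → ℝ, f (e.symm (z, y))) :=
      (ofReal_integral_eq_lintegral_ofReal hz (Filter.Eventually.of_forall fun y => hf0 _)).symm
    calc ∫⁻ y : Fin K → Fin d → ℝ, ENNReal.ofReal (f (e.symm (z, y))) * H z
        = (∫⁻ y : Fin K → Fin d → ℝ, ENNReal.ofReal (f (e.symm (z, y)))) * H z :=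
          lintegral_mul_const _ hmy
      _ = ENNReal.ofReal (∫ y : Fin K → Fin d → ℝ, f (e.symm (z, y))) * H z := by rw [heq]
      _ = H z * ENNReal.ofReal (∫ y : Fin K → Fin d → ℝ, f (Fin.insertNth i z y)) := by
          simp_rw [hsymm]; ring
  rw [main p hpm hp0 hpi, main q hqm hq0 hqi]
  apply lintegral_congr
  intro z
  rw [hmarg z]

/-- **`p*` is the unique minimizer of `KL(·‖r)` under the marginal constraints.** On path
space `X = (ℝ^d)^{K+1}` with reference `r > 0` and Gibbs potentials `φ₀, φ_K > 0`, let
`p*(x) := φ₀(x₀) r(x) φ_K(x_K) / Z` with `Z ∈ (0,∞)` the total integral, and let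
`p₀, p_K` be the `x₀`- and `x_K`-marginals of `p*`. Then `p*` minimizes
`p ↦ KL(p‖r) = ∫ p log(p/r)` over all probability densities `p` on path space with
`x₀`-marginal `p₀`, `x_K`-marginal `p_K` and finite `KL(p‖r)`, and any such minimizer
coincides with `p*` Lebesgue-almost everywhere. -/
theorem schrodinger_bridge_unique_minimizer
    {d K : ℕ}
    (r : (Fin (K + 1) → Fin d → ℝ) → ℝ)
    (φ0 φK : (Fin d → ℝ) → ℝ)
    (hr : Measurable r) (hrpos : ∀ x, 0 < r x)
    (hφ0 : Measurable φ0) (hφ0pos : ∀ u, 0 < φ0 u)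
    (hφK : Measurable φK) (hφKpos : ∀ u, 0 < φK u)
    (Z : ℝ)
    (hZ : Z = ∫ x : Fin (K + 1) → Fin d → ℝ, φ0 (x 0) * r x * φK (x (Fin.last K)))
    (hZint : Integrable
      (fun x : Fin (K + 1) → Fin d → ℝ => φ0 (x 0) * r x * φK (x (Fin.last K))))
    (hZpos : 0 < Z)
    (pstar : (Fin (K + 1) → Fin d → ℝ) → ℝ)
    (hpstar : pstar = fun x => φ0 (x 0) * r x * φK (x (Fin.last K)) / Z)
    (p0 pK : (Fin d → ℝ) → ℝ)
    (hp0 : p0 = fun x0 => ∫ y : Fin K → Fin d → ℝ, pstar (Fin.cons x0 y))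
    (hpK : pK = fun xK => ∫ y : Fin K → Fin d → ℝ, pstar (Fin.snoc y xK))
    (hKLstar : Integrable (fun x => pstar x * Real.log (pstar x / r x))) :
    ∀ p : (Fin (K + 1) → Fin d → ℝ) → ℝ,
      Measurable p → (∀ x, 0 ≤ p x) → (∫ x, p x) = 1 →
      (∀ x0, (∫ y : Fin K → Fin d → ℝ, p (Fin.cons x0 y)) = p0 x0) →
      (∀ xK, (∫ y : Fin K → Fin d → ℝ, p (Fin.snoc y xK)) = pK xK) →
      Integrable (fun x => p x * Real.log (p x / r x)) →
      (∫ x, pstar x * Real.log (pstar x / r x)) ≤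
          (∫ x, p x * Real.log (p x / r x)) ∧
        ((∫ x, p x * Real.log (p x / r x)) =
            (∫ x, pstar x * Real.log (pstar x / r x)) →
          p =ᵐ[volume] pstar) := by
  intro p hpm hpnn hp1 hm0 hmK hKLp
  -- basic facts about pstar
  have hqm : Measurable pstar := by
    rw [hpstar]
    exact (((hφ0.comp (measurable_pi_apply 0)).mul hr).mul
      (hφK.comp (measurable_pi_apply (Fin.last K)))).div_const Z
  have hqpos : ∀ x, 0 < pstar x := by
    intro x; rw [hpstar]
    exact div_pos (mul_pos (mul_pos (hφ0pos _) (hrpos _)) (hφKpos _)) hZpos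
  have hqnn : ∀ x, 0 ≤ pstar x := fun x => (hqpos x).le
  have hqint : Integrable pstar := by rw [hpstar]; exact hZint.div_const Z
  have hq1 : (∫ x, pstar x) = 1 := by
    rw [hpstar, integral_div, ← hZ, div_self hZpos.ne']
  have hpint : Integrable p := by
    by_contra h
    rw [integral_undef h] at hp1
    norm_num at hp1
  -- potentials
  set u : (Fin d → ℝ) → ℝ := fun z => Real.log (φ0 z) with hu
  set w : (Fin d → ℝ) → ℝ := fun z => Real.log (φK z) with hw
  set c : ℝ := Real.log Z with hc
  set F : (Fin (K + 1) → Fin d → ℝ) → ℝ :=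
    fun x => u (x 0) + w (x (Fin.last K)) with hF
  have hFm : Measurable F :=
    ((hφ0.comp (measurable_pi_apply 0)).log).add
      ((hφK.comp (measurable_pi_apply (Fin.last K))).log)
  -- pointwise identity for pstar
  have hqlog : ∀ x, pstar x * Real.log (pstar x / r x) = pstar x * F x - c * pstar x := by
    intro x
    have h1 : pstar x / r x = φ0 (x 0) * φK (x (Fin.last K)) / Z := by
      rw [hpstar]
      field_simp [(hrpos x).ne', hZpos.ne']
    rw [h1, Real.log_div (mul_pos (hφ0pos _) (hφKpos _)).ne' hZpos.ne',
      Real.log_mul (hφ0pos _).ne' (hφKpos _).ne']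
    simp only [hF, hu, hw, hc]
    ring
  have hqF_int : Integrable (fun x => pstar x * F x) := by
    have : (fun x => pstar x * F x)
        = fun x => pstar x * Real.log (pstar x / r x) + c * pstar x := by
      funext x; rw [hqlog x]; ring
    rw [this]
    exact hKLstar.add (hqint.const_mul c)
  -- key pointwise inequality
  have I2 : ∀ x, p x * F x ≤ p x * Real.log (p x / r x) + c * p x - p x + pstar x := by
    intro x
    rcases eq_or_lt_of_le (hpnn x) with h0 | hpos
    · rw [← h0]
      simp only [zero_mul, mul_zero, add_zero, zero_add, neg_zero, sub_zero]
      have := (hqpos x).le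
      linarith
    · have hlog : Real.log (pstar x / p x) ≤ pstar x / p x - 1 :=
        Real.log_le_sub_one_of_pos (div_pos (hqpos x) hpos)
      have hlq : Real.log (pstar x / p x) = Real.log (pstar x) - Real.log (p x) :=
        Real.log_div (hqpos x).ne' hpos.ne'
      have hlpr : Real.log (p x / r x) = Real.log (p x) - Real.log (r x) :=
        Real.log_div hpos.ne' (hrpos x).ne'
      have hlq2 : Real.log (pstar x) = F x + Real.log (r x) - c := by
        rw [hpstar]
        simp only
        rw [Real.log_div (mul_pos (mul_pos (hφ0pos _) (hrpos _)) (hφKpos _)).ne' hZpos.ne',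
          Real.log_mul (mul_pos (hφ0pos _) (hrpos _)).ne' (hφKpos _).ne',
          Real.log_mul (hφ0pos _).ne' (hrpos _).ne']
        simp only [hF, hu, hw, hc]
        ring
      -- from hlog : log pstar - log p ≤ pstar/p - 1
      have h3 : p x * (Real.log (pstar x) - Real.log (p x)) ≤ pstar x - p x := by
        have := mul_le_mul_of_nonneg_left hlog (hpnn x)
        calc p x * (Real.log (pstar x) - Real.log (p x))
            = p x * Real.log (pstar x / p x) := by rw [hlq]
          _ ≤ p x * (pstar x / p x - 1) := this
          _ = pstar x - p x := by field_simp
      have h4 : Real.log (pstar x) - Real.log (p x) = F x - c - Real.log (p x / r x) := by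
        rw [hlq2, hlpr]; ring
      rw [h4] at h3
      nlinarith [h3]
  -- measures with densities
  set P := volume.withDensity (fun x => ENNReal.ofReal (p x)) with hPdef
  set Q := volume.withDensity (fun x => ENNReal.ofReal (pstar x)) with hQdef
  haveI hPfin : IsFiniteMeasure P := isFiniteMeasure_withDensity hpint.lintegral_lt_top.ne
  haveI hQfin : IsFiniteMeasure Q := isFiniteMeasure_withDensity hqint.lintegral_lt_top.ne
  set U : (Fin (K + 1) → Fin d → ℝ) → ℝ := fun x => u (x 0) with hU
  set V : (Fin (K + 1) → Fin d → ℝ) → ℝ := fun x => - w (x (Fin.last K)) with hV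
  have hUm : Measurable U := (hφ0.log).comp (measurable_pi_apply 0)
  have hVm : Measurable V := ((hφK.log).comp (measurable_pi_apply (Fin.last K))).neg
  have hUV : ∀ x, U x - V x = F x := by intro x; simp [hU, hV, hF]
  -- marginal equalities at lintegral level
  have hmarg0' : ∀ z : Fin d → ℝ,
      (∫ y : Fin K → Fin d → ℝ, p (Fin.insertNth 0 z y))
        = ∫ y : Fin K → Fin d → ℝ, pstar (Fin.insertNth 0 z y) := by
    intro z
    simp only [Fin.insertNth_zero']
    rw [hm0 z, hp0]
  have hmargK' : ∀ z : Fin d → ℝ,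
      (∫ y : Fin K → Fin d → ℝ, p (Fin.insertNth (Fin.last K) z y))
        = ∫ y : Fin K → Fin d → ℝ, pstar (Fin.insertNth (Fin.last K) z y) := by
    intro z
    simp only [Fin.insertNth_last']
    rw [hmK z, hpK]
  have hmargH0 : ∀ {H : (Fin d → ℝ) → ENNReal}, Measurable H →
      ∫⁻ x, ENNReal.ofReal (p x) * H (x 0) = ∫⁻ x, ENNReal.ofReal (pstar x) * H (x 0) :=
    fun hH => marginal_lintegral_eq 0 p pstar hpm hqm hpnn hqnn hpint hqint hmarg0' hH
  have hmargHK : ∀ {H : (Fin d → ℝ) → ENNReal}, Measurable H →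
      ∫⁻ x, ENNReal.ofReal (p x) * H (x (Fin.last K))
        = ∫⁻ x, ENNReal.ofReal (pstar x) * H (x (Fin.last K)) :=
    fun hH => marginal_lintegral_eq (Fin.last K) p pstar hpm hqm hpnn hqnn hpint hqint hmargK' hH
  -- distribution equalities for Lemma A
  have hmapgen : ∀ (W : (Fin d → ℝ) → ℝ), Measurable W →
      (∀ t : ℝ, P {x | t < W (x 0)} = Q {x | t < W (x 0)}) := by
    intro W hWm t
    have hsetE : MeasurableSet {z : Fin d → ℝ | t < W z} :=
      measurableSet_lt measurable_const hWm
    have hset : MeasurableSet {x : Fin (K + 1) → Fin d → ℝ | t < W (x 0)} :=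
      measurableSet_lt measurable_const (hWm.comp (measurable_pi_apply 0))
    rw [hPdef, hQdef, withDensity_apply _ hset, withDensity_apply _ hset,
      ← lintegral_indicator hset, ← lintegral_indicator hset]
    have key : ∀ (f : (Fin (K + 1) → Fin d → ℝ) → ℝ),
        (fun x => ({x : Fin (K + 1) → Fin d → ℝ | t < W (x 0)}).indicator
            (fun a => ENNReal.ofReal (f a)) x)
          = fun x => ENNReal.ofReal (f x) * ({z : Fin d → ℝ | t < W z}).indicator 1 (x 0) := by
      intro f
      funext x
      by_cases hx : t < W (x 0)
      · rw [Set.indicator_of_mem (by exact hx), Set.indicator_of_mem (by exact hx)]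
        simp
      · rw [Set.indicator_of_notMem (by exact hx), Set.indicator_of_notMem (by exact hx)]
        simp
    rw [key p, key pstar]
    exact hmargH0 (measurable_one.indicator hsetE)
  have hmapgenK : ∀ (W : (Fin d → ℝ) → ℝ), Measurable W →
      (∀ t : ℝ, P {x | t < W (x (Fin.last K))} = Q {x | t < W (x (Fin.last K))}) := by
    intro W hWm t
    have hsetE : MeasurableSet {z : Fin d → ℝ | t < W z} :=
      measurableSet_lt measurable_const hWm
    have hset : MeasurableSet {x : Fin (K + 1) → Fin d → ℝ | t < W (x (Fin.last K))} :=
      measurableSet_lt measurable_const (hWm.comp (measurable_pi_apply (Fin.last K)))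
    rw [hPdef, hQdef, withDensity_apply _ hset, withDensity_apply _ hset,
      ← lintegral_indicator hset, ← lintegral_indicator hset]
    have key : ∀ (f : (Fin (K + 1) → Fin d → ℝ) → ℝ),
        (fun x => ({x : Fin (K + 1) → Fin d → ℝ | t < W (x (Fin.last K))}).indicator
            (fun a => ENNReal.ofReal (f a)) x)
          = fun x => ENNReal.ofReal (f x)
              * ({z : Fin d → ℝ | t < W z}).indicator 1 (x (Fin.last K)) := by
      intro f
      funext x
      by_cases hx : t < W (x (Fin.last K))
      · rw [Set.indicator_of_mem (by exact hx), Set.indicator_of_mem (by exact hx)]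
        simp
      · rw [Set.indicator_of_notMem (by exact hx), Set.indicator_of_notMem (by exact hx)]
        simp
    rw [key p, key pstar]
    exact hmargHK (measurable_one.indicator hsetE)
  have fourid := four_integral_identity P Q hUm hVm
    (hmapgen u hφ0.log) (hmapgenK (fun z => - w z) (hφK.log.neg))
  -- convert the four integrals to volume integrals
  have convP : ∀ (G : (Fin (K + 1) → Fin d → ℝ) → ℝ), Measurable G →
      ∀ (f : (Fin (K + 1) → Fin d → ℝ) → ℝ), Measurable f → (∀ x, 0 ≤ f x) →
      ∫⁻ x, ENNReal.ofReal (G x) ∂(volume.withDensity (fun x => ENNReal.ofReal (f x)))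
        = ∫⁻ x, ENNReal.ofReal (f x * G x) := by
    intro G hGm f hfm hf0
    rw [lintegral_withDensity_eq_lintegral_mul volume hfm.ennreal_ofReal hGm.ennreal_ofReal]
    apply lintegral_congr
    intro x
    simp only [Pi.mul_apply]
    rw [ENNReal.ofReal_mul (hf0 x)]
  -- the four lintegrals over volume
  set A1 := ∫⁻ x, ENNReal.ofReal (p x * F x) with hA1
  set A2 := ∫⁻ x, ENNReal.ofReal (-(p x * F x)) with hA2
  set B1 := ∫⁻ x, ENNReal.ofReal (pstar x * F x) with hB1
  set B2 := ∫⁻ x, ENNReal.ofReal (-(pstar x * F x)) with hB2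
  have eP1 : (∫⁻ x, ENNReal.ofReal (U x - V x) ∂P) = A1 := by
    rw [hPdef, convP (fun x => U x - V x) (hUm.sub hVm) p hpm hpnn]
    apply lintegral_congr; intro x; rw [hUV x]
  have eP2 : (∫⁻ x, ENNReal.ofReal (V x - U x) ∂P) = A2 := by
    rw [hPdef, convP (fun x => V x - U x) (hVm.sub hUm) p hpm hpnn]
    apply lintegral_congr; intro x
    congr 1
    rw [← hUV x]; ring
  have eQ1 : (∫⁻ x, ENNReal.ofReal (U x - V x) ∂Q) = B1 := by
    rw [hQdef, convP (fun x => U x - V x) (hUm.sub hVm) pstar hqm hqnn]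
    apply lintegral_congr; intro x; rw [hUV x]
  have eQ2 : (∫⁻ x, ENNReal.ofReal (V x - U x) ∂Q) = B2 := by
    rw [hQdef, convP (fun x => V x - U x) (hVm.sub hUm) pstar hqm hqnn]
    apply lintegral_congr; intro x
    congr 1
    rw [← hUV x]; ring
  rw [eP1, eP2, eQ1, eQ2] at fourid
  -- finiteness
  have int1 : Integrable (fun x => p x * Real.log (p x / r x) + c * p x) :=
    hKLp.add (hpint.const_mul c)
  have int2 : Integrable (fun x => p x * Real.log (p x / r x) + c * p x - p x) :=
    int1.sub hpint
  have hbig : Integrable (fun x => p x * Real.log (p x / r x) + c * p x - p x + pstar x) :=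
    int2.add hqint
  have hA1fin : A1 ≠ ⊤ := by
    have hle : A1 ≤ ∫⁻ x, ENNReal.ofReal (p x * Real.log (p x / r x) + c * p x - p x + pstar x) :=
      lintegral_mono fun x => ENNReal.ofReal_le_ofReal (I2 x)
    exact (lt_of_le_of_lt hle hbig.lintegral_lt_top).ne
  have hB1fin : B1 ≠ ⊤ := hqF_int.lintegral_lt_top.ne
  have hB2fin : B2 ≠ ⊤ := by
    have h := hqF_int.neg.lintegral_lt_top
    have : (∫⁻ x, ENNReal.ofReal ((-fun x => pstar x * F x) x)) = B2 := by
      apply lintegral_congr; intro x; simp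
    rw [this] at h
    exact h.ne
  have hA2fin : A2 ≠ ⊤ := by
    have hle : A2 ≤ A1 + B2 := by rw [fourid]; exact le_self_add
    exact (lt_of_le_of_lt hle
      (ENNReal.add_lt_top.mpr ⟨hA1fin.lt_top, hB2fin.lt_top⟩)).ne
  -- p * F is integrable
  have hpF_int : Integrable (fun x => p x * F x) := by
    refine ⟨(hpm.mul hFm).aestronglyMeasurable, ?_⟩
    rw [hasFiniteIntegral_iff_norm]
    have hpt : ∀ x, ENNReal.ofReal ‖p x * F x‖
        ≤ ENNReal.ofReal (p x * F x) + ENNReal.ofReal (-(p x * F x)) := by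
      intro x
      rcases le_total 0 (p x * F x) with h | h
      · rw [Real.norm_eq_abs, abs_of_nonneg h]; exact le_self_add
      · rw [Real.norm_eq_abs, abs_of_nonpos h]; exact le_add_self
    calc ∫⁻ x, ENNReal.ofReal ‖p x * F x‖
        ≤ ∫⁻ x, (ENNReal.ofReal (p x * F x) + ENNReal.ofReal (-(p x * F x))) :=
          lintegral_mono hpt
      _ = A1 + A2 := lintegral_add_left ((hpm.mul hFm).ennreal_ofReal) _
      _ < ⊤ := ENNReal.add_lt_top.mpr ⟨hA1fin.lt_top, hA2fin.lt_top⟩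
  -- equality of integrals of p*F and pstar*F
  have hint_eq : (∫ x, p x * F x) = ∫ x, pstar x * F x := by
    rw [integral_eq_lintegral_pos_part_sub_lintegral_neg_part hpF_int,
      integral_eq_lintegral_pos_part_sub_lintegral_neg_part hqF_int]
    have h := congrArg ENNReal.toReal fourid
    rw [ENNReal.toReal_add hA1fin hB2fin, ENNReal.toReal_add hA2fin hB1fin] at h
    simp only [← hA1, ← hA2, ← hB1, ← hB2]
    linarith
  -- value of integral of pstar * F
  have hqF_val : (∫ x, pstar x * F x)
      = (∫ x, pstar x * Real.log (pstar x / r x)) + c := by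
    have hfe : (fun x => pstar x * F x)
        = fun x => pstar x * Real.log (pstar x / r x) + c * pstar x := by
      funext x; rw [hqlog x]; ring
    rw [hfe, integral_add hKLstar (hqint.const_mul c), integral_const_mul, hq1, mul_one]
  -- the entropy gap function
  set D : (Fin (K + 1) → Fin d → ℝ) → ℝ :=
    fun x => p x * Real.log (p x / r x) + c * p x - p x + pstar x - p x * F x with hD
  have hDnn : ∀ x, 0 ≤ D x := by
    intro x
    have := I2 x
    simp only [hD]
    linarith
  have hDint : Integrable D := hbig.sub hpF_int
  have hDval : (∫ x, D x) = (∫ x, p x * Real.log (p x / r x))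
      - ∫ x, pstar x * Real.log (pstar x / r x) := by
    simp only [hD]
    rw [integral_sub hbig hpF_int, integral_add int2 hqint, integral_sub int1 hpint,
      integral_add hKLp (hpint.const_mul c), integral_const_mul, hp1, hq1, hint_eq, hqF_val]
    ring
  constructor
  · have h0 : 0 ≤ ∫ x, D x := integral_nonneg hDnn
    linarith
  · intro heq
    have hz : (∫ x, D x) = 0 := by rw [hDval]; linarith
    have hae := (integral_eq_zero_iff_of_nonneg hDnn hDint).mp hz
    filter_upwards [hae] with x hx
    have hx0 : D x = 0 := hx
    by_contra hne
    rcases eq_or_lt_of_le (hpnn x) with h0 | hpos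
    · have hDx : D x = pstar x := by
        simp only [hD]
        rw [← h0]
        ring
      exact (hqpos x).ne' (hDx.symm.trans hx0)
    · have hne1 : pstar x / p x ≠ 1 := by
        intro h
        have : pstar x = p x := by
          field_simp at h
          linarith
        exact hne this.symm
      have hlog : Real.log (pstar x / p x) < pstar x / p x - 1 :=
        Real.log_lt_sub_one_of_pos (div_pos (hqpos x) hpos) hne1
      have h3 : p x * Real.log (pstar x / p x) < pstar x - p x := by
        have h5 := mul_lt_mul_of_pos_left hlog hpos
        calc p x * Real.log (pstar x / p x)
            < p x * (pstar x / p x - 1) := h5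
          _ = pstar x - p x := by field_simp
      have hlq : Real.log (pstar x / p x) = Real.log (pstar x) - Real.log (p x) :=
        Real.log_div (hqpos x).ne' hpos.ne'
      have hlpr : Real.log (p x / r x) = Real.log (p x) - Real.log (r x) :=
        Real.log_div hpos.ne' (hrpos x).ne'
      have hlq2 : Real.log (pstar x) = F x + Real.log (r x) - c := by
        rw [hpstar]
        simp only
        rw [Real.log_div (mul_pos (mul_pos (hφ0pos _) (hrpos _)) (hφKpos _)).ne' hZpos.ne',
          Real.log_mul (mul_pos (hφ0pos _) (hrpos _)).ne' (hφKpos _).ne',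
          Real.log_mul (hφ0pos _).ne' (hrpos _).ne']
        simp only [hF, hu, hw, hc]
        ring
      have h4 : Real.log (pstar x / p x) = F x - c - Real.log (p x / r x) := by
        rw [hlq, hlq2, hlpr]; ring
      rw [h4] at h3
      have hDx : D x = 0 := hx0
      simp only [hD] at hDx
      nlinarith [h3, hDx]
end

section
/- Let r_0, …, r_{K-1} : ℝ^d × ℝ^d → (0, ∞), φ_0, φ_K : ℝ^d → (0, ∞) be measurable, set p*(x_0, …, x_K) := φ_0(x_0) (∏_{k=0}^{K-1} r_k(x_k, x_{k+1})) φ_K(x_K) / Z with Z ∈ (0, ∞) the total integral, and let φ⁻_k be the backward potentials, assumed finite and strictly positive everywhere. Denote by p*_{0:k} the marginal of p* on (x_0, …, x_k). Then for every k ∈ {0, …, K−1} and all (x_0, …, x_{k+1}), the conditional density p*_{0:k+1}(x_0, …, x_{k+1}) / p*_{0:k}(x_0, …, x_k) equals r_k(x_k, x_{k+1}) φ⁻_{k+1}(x_{k+1}) / φ⁻_k(x_k); in particular it depends only on (x_k, x_{k+1}), so p* is a Markov chain with this transition kernel. -/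
open MeasureTheory

/-- Backward potentials indexed by the number of remaining steps: `backward K r φK j`
is the potential `φ⁻_{K-j}`, i.e. `backward K r φK 0 = φ_K` and
`φ⁻_{K-(j+1)}(x) = ∫ r_{K-(j+1)}(x, y) φ⁻_{K-j}(y) dy`. -/
noncomputable def backward {V : Type*} [MeasureSpace V]
    (K : ℕ) (r : ℕ → V → V → ℝ) (φK : V → ℝ) : ℕ → V → ℝ
  | 0 => φK
  | j + 1 => fun x => ∫ y, r (K - (j + 1)) x y * backward K r φK j y

/-- The full path on `{0, …, K}` whose first `k+1` coordinates are those of `x` and whose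
remaining `K - k` coordinates `x_{k+1}, …, x_K` are given by `y`. -/
def glue {V : Type*} (K k : ℕ) (x : Fin (K + 1) → V) (y : Fin (K - k) → V) :
    Fin (K + 1) → V :=
  fun i => if h : (i : ℕ) ≤ k then x i
    else y ⟨(i : ℕ) - (k + 1), by have := i.isLt; omega⟩

private lemma measurable_cons_apply {n : ℕ} {α : Type*} [MeasurableSpace α]
    (a : α) (i : Fin (n + 1)) :
    Measurable fun y : Fin n → α => (Fin.cons a y : Fin (n+1) → α) i := by
  exact Fin.cases (motive := fun i => Measurable fun y : Fin n → α => (Fin.cons a y : Fin (n+1) → α) i)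
    (by simpa using measurable_const) (fun j => by simpa using measurable_pi_apply j) i

private lemma backward_measurable {d K : ℕ} (r : ℕ → (Fin d → ℝ) → (Fin d → ℝ) → ℝ)
    (φK : (Fin d → ℝ) → ℝ) (hr : ∀ j, Measurable (Function.uncurry (r j)))
    (hφK : Measurable φK) : ∀ j, Measurable (backward K r φK j) := by
  intro j
  induction j with
  | zero => exact hφK
  | succ j ih =>
    have hm : Measurable fun p : (Fin d → ℝ) × (Fin d → ℝ) =>
        r (K - (j + 1)) p.1 p.2 * backward K r φK j p.2 :=
      (hr _).mul (ih.comp measurable_snd)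
    exact (StronglyMeasurable.integral_prod_right' hm.stronglyMeasurable).measurable

private lemma chain_key {d K : ℕ}
    (r : ℕ → (Fin d → ℝ) → (Fin d → ℝ) → ℝ)
    (φK : (Fin d → ℝ) → ℝ)
    (hr : ∀ j, Measurable (Function.uncurry (r j)))
    (hrpos : ∀ j x y, 0 < r j x y)
    (hφK : Measurable φK)
    (hfin : ∀ (j : ℕ) (x : Fin d → ℝ),
      Integrable (fun y => r (K - (j + 1)) x y * backward K r φK j y))
    (hbackpos : ∀ (j : ℕ) (x : Fin d → ℝ), 0 < backward K r φK j x) :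
    ∀ (n m : ℕ), n + m ≤ K → ∀ a : Fin d → ℝ,
      Integrable (fun y : Fin n → Fin d → ℝ =>
        (∏ j : Fin n, r (K - m - n + (j : ℕ))
            ((Fin.cons a y : Fin (n+1) → Fin d → ℝ) j.castSucc)
            ((Fin.cons a y : Fin (n+1) → Fin d → ℝ) j.succ)) *
          backward K r φK m ((Fin.cons a y : Fin (n+1) → Fin d → ℝ) (Fin.last n))) ∧
      (∫ y : Fin n → Fin d → ℝ,
        (∏ j : Fin n, r (K - m - n + (j : ℕ))
            ((Fin.cons a y : Fin (n+1) → Fin d → ℝ) j.castSucc)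
            ((Fin.cons a y : Fin (n+1) → Fin d → ℝ) j.succ)) *
          backward K r φK m ((Fin.cons a y : Fin (n+1) → Fin d → ℝ) (Fin.last n)))
        = backward K r φK (n + m) a := by
  intro n
  induction n with
  | zero =>
    intro m _ a
    haveI : IsProbabilityMeasure (volume : Measure (Fin 0 → Fin d → ℝ)) := by
      constructor; simp [volume_pi, Measure.pi_univ]
    have h0 : (fun y : Fin 0 → Fin d → ℝ =>
        (∏ j : Fin 0, r (K - m - 0 + (j : ℕ))
            ((Fin.cons a y : Fin 1 → Fin d → ℝ) j.castSucc)
            ((Fin.cons a y : Fin 1 → Fin d → ℝ) j.succ)) *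
          backward K r φK m ((Fin.cons a y : Fin 1 → Fin d → ℝ) (Fin.last 0)))
        = fun _ => backward K r φK m a := by
      funext y; simp
    rw [h0]
    refine ⟨integrable_const _, ?_⟩
    simp
  | succ n ih =>
    intro m hm a
    have hm' : n + (m + 1) ≤ K := by omega
    -- abbreviations
    set G : (Fin n → Fin d → ℝ) → ℝ := fun y' =>
      ∏ j : Fin n, r (K - (m + 1) - n + (j : ℕ))
        ((Fin.cons a y' : Fin (n+1) → Fin d → ℝ) j.castSucc)
        ((Fin.cons a y' : Fin (n+1) → Fin d → ℝ) j.succ) with hG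
    set c : (Fin n → Fin d → ℝ) → (Fin d → ℝ) := fun y' =>
      (Fin.cons a y' : Fin (n + 1) → Fin d → ℝ) (Fin.last n) with hc
    set F : (Fin (n + 1) → Fin d → ℝ) → ℝ := fun y =>
      (∏ j : Fin (n + 1), r (K - m - (n + 1) + (j : ℕ))
          ((Fin.cons a y : Fin (n+2) → Fin d → ℝ) j.castSucc)
          ((Fin.cons a y : Fin (n+2) → Fin d → ℝ) j.succ)) *
        backward K r φK m ((Fin.cons a y : Fin (n+2) → Fin d → ℝ) (Fin.last (n + 1))) with hF
    set H : (Fin d → ℝ) × (Fin n → Fin d → ℝ) → ℝ := fun p =>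
      G p.2 * (r (K - (m + 1)) (c p.2) p.1 * backward K r φK m p.1) with hH
    have hidx : ∀ t : ℕ, K - m - (n + 1) + t = K - (m + 1) - n + t := by omega
    have hidx2 : K - (m + 1) - n + n = K - (m + 1) := by omega
    -- pointwise identification
    have hkey : ∀ (z : Fin d → ℝ) (y' : Fin n → Fin d → ℝ),
        F (Fin.snoc y' z) = H (z, y') := by
      intro z y'
      rw [hF]
      simp only [Fin.cons_snoc_eq_snoc_cons, Fin.prod_univ_castSucc, Fin.snoc_castSucc,
        Fin.coe_castSucc, Fin.succ_castSucc, Fin.succ_last, Fin.snoc_last, Fin.val_last]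
      simp only [hidx, hidx2]
      rw [hH, hG, hc]
      ring
    -- measurability of H
    have hGm : Measurable G := by
      rw [hG]
      exact Finset.measurable_prod _ fun j _ =>
        (hr _).comp ((measurable_cons_apply a j.castSucc).prodMk (measurable_cons_apply a j.succ))
    have hHm : Measurable H := by
      rw [hH]
      exact (hGm.comp measurable_snd).mul
        (((hr _).comp (((measurable_cons_apply a (Fin.last n)).comp measurable_snd).prodMk
          measurable_fst)).mul ((backward_measurable r φK hr hφK m).comp measurable_fst))
    have hGpos : ∀ y', 0 < G y' := fun y' =>
      Finset.prod_pos fun j _ => hrpos _ _ _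
    -- slices and inner integrals
    have hslice : ∀ y', Integrable (fun z => H (z, y')) := by
      intro y'
      exact (hfin m (c y')).const_mul (G y')
    have hinner : ∀ y', (∫ z, H (z, y'))
        = G y' * backward K r φK (m + 1) (c y') := by
      intro y'
      rw [hH]
      simp only
      rw [integral_const_mul]
      rfl
    have hnorm : ∀ y', (∫ z, ‖H (z, y')‖)
        = G y' * backward K r φK (m + 1) (c y') := by
      intro y'
      rw [← hinner y']
      congr 1
      funext z
      exact Real.norm_of_nonneg (by
        have := hGpos y'
        have := hrpos (K - (m + 1)) (c y') z
        have := hbackpos m z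
        positivity)
    -- integrability of H on the product
    have hHint : Integrable H ((volume : Measure (Fin d → ℝ)).prod
        (volume : Measure (Fin n → Fin d → ℝ))) := by
      rw [integrable_prod_iff' hHm.aestronglyMeasurable]
      refine ⟨Filter.Eventually.of_forall hslice, ?_⟩
      have : (fun y' => ∫ z, ‖H (z, y')‖)
          = fun y' => G y' * backward K r φK (m + 1) (c y') := funext hnorm
      rw [this]
      exact (ih (m + 1) hm' a).1
    -- measure preserving splitting
    have hmp := measurePreserving_piFinSuccAbove
      (fun _ : Fin (n + 1) => (volume : Measure (Fin d → ℝ))) (Fin.last n)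
    set e := MeasurableEquiv.piFinSuccAbove (fun _ : Fin (n + 1) => Fin d → ℝ) (Fin.last n)
      with he
    have hcomp : ∀ p : (Fin d → ℝ) × (Fin n → Fin d → ℝ), F (e.symm p) = H p := by
      intro p
      have : e.symm p = Fin.snoc p.2 p.1 := by
        rw [he]
        simp only [MeasurableEquiv.piFinSuccAbove_symm_apply, Fin.insertNthEquiv_last]
        rfl
      rw [this, hkey]
    have hmps : MeasurePreserving e.symm
        (((volume : Measure (Fin d → ℝ))).prod (volume : Measure (Fin n → Fin d → ℝ)))
        (volume : Measure (Fin (n + 1) → Fin d → ℝ)) := hmp.symm e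
    constructor
    · have h1 : Integrable (F ∘ e.symm) (((volume : Measure (Fin d → ℝ))).prod
          (volume : Measure (Fin n → Fin d → ℝ))) := by
        have : F ∘ e.symm = H := funext hcomp
        rw [this]; exact hHint
      exact (hmps.integrable_comp_emb e.symm.measurableEmbedding).mp h1
    · have h1 : (∫ y, F y) = ∫ p, F (e.symm p) ∂(((volume : Measure (Fin d → ℝ))).prod
          (volume : Measure (Fin n → Fin d → ℝ))) :=
        (hmps.integral_comp e.symm.measurableEmbedding F).symm
      rw [h1]
      have h2 : (∫ p, F (e.symm p) ∂(((volume : Measure (Fin d → ℝ))).prod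
          (volume : Measure (Fin n → Fin d → ℝ)))) = ∫ p, H p ∂(((volume : Measure (Fin d → ℝ))).prod
          (volume : Measure (Fin n → Fin d → ℝ))) := by
        congr 1; exact funext hcomp
      rw [h2, integral_prod _ hHint]
      rw [integral_integral_swap (by exact hHint)]
      have h3 : (fun y' => ∫ z, H (z, y'))
          = fun y' => G y' * backward K r φK (m + 1) (c y') := funext hinner
      simp only [h3]
      have h4 := (ih (m + 1) hm' a).2
      rw [hG, hc] at *
      rw [h4]
      congr 1
      omega

private lemma glue_cons_eq {V : Type*} {K k : ℕ} (hk : k ≤ K) (x : Fin (K + 1) → V)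
    (y : Fin (K - k) → V) (t : ℕ) (ht : t ≤ K - k) :
    glue K k x y ⟨k + t, by omega⟩
      = (Fin.cons (x ⟨k, by omega⟩) y : Fin (K - k + 1) → V) ⟨t, by omega⟩ := by
  cases t with
  | zero =>
    have h1 : glue K k x y ⟨k + 0, by omega⟩ = x ⟨k + 0, by omega⟩ :=
      dif_pos (by simp only [Fin.val_mk]; omega)
    rw [h1]
    have h2 : (⟨0, by omega⟩ : Fin (K - k + 1)) = 0 := rfl
    rw [h2, Fin.cons_zero]
    exact congrArg x (Fin.ext (Nat.add_zero k))
  | succ s =>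
    have h1 : glue K k x y ⟨k + (s + 1), by omega⟩
        = y ⟨k + (s + 1) - (k + 1), by omega⟩ := dif_neg (by simp only [Fin.val_mk]; omega)
    rw [h1]
    have h2 : (⟨s + 1, by omega⟩ : Fin (K - k + 1)) = Fin.succ ⟨s, by omega⟩ := rfl
    rw [h2, Fin.cons_succ]
    exact congrArg y (Fin.ext (by simp only [Fin.val_mk]; omega))

private lemma marginal_eq {d K : ℕ}
    (r : ℕ → (Fin d → ℝ) → (Fin d → ℝ) → ℝ)
    (φ0 φK : (Fin d → ℝ) → ℝ)
    (hr : ∀ j, Measurable (Function.uncurry (r j)))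
    (hrpos : ∀ j x y, 0 < r j x y)
    (hφK : Measurable φK)
    (hfin : ∀ (j : ℕ) (x : Fin d → ℝ),
      Integrable (fun y => r (K - (j + 1)) x y * backward K r φK j y))
    (hbackpos : ∀ (j : ℕ) (x : Fin d → ℝ), 0 < backward K r φK j x)
    (Z : ℝ) (k : ℕ) (hk : k ≤ K) (x : Fin (K + 1) → Fin d → ℝ) :
    (∫ y : Fin (K - k) → Fin d → ℝ,
        φ0 (glue K k x y 0) *
          (∏ j : Fin K, r j (glue K k x y (Fin.castSucc j)) (glue K k x y (Fin.succ j))) *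
          φK (glue K k x y (Fin.last K)) / Z)
      = φ0 (x 0) *
          (∏ j ∈ Finset.range k,
            r j (x ⟨min j K, Nat.lt_succ_of_le (min_le_right j K)⟩)
              (x ⟨min (j + 1) K, Nat.lt_succ_of_le (min_le_right (j + 1) K)⟩)) *
          backward K r φK (K - k) (x ⟨k, Nat.lt_succ_of_le hk⟩) / Z := by
  set a : Fin d → ℝ := x ⟨k, Nat.lt_succ_of_le hk⟩ with ha
  have key := chain_key r φK hr hrpos hφK hfin hbackpos (K - k) 0 (by omega) a
  -- pointwise identity
  have hpt : ∀ y : Fin (K - k) → Fin d → ℝ,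
      φ0 (glue K k x y 0) *
        (∏ j : Fin K, r j (glue K k x y (Fin.castSucc j)) (glue K k x y (Fin.succ j))) *
        φK (glue K k x y (Fin.last K))
      = (φ0 (x 0) *
          (∏ j ∈ Finset.range k,
            r j (x ⟨min j K, Nat.lt_succ_of_le (min_le_right j K)⟩)
              (x ⟨min (j + 1) K, Nat.lt_succ_of_le (min_le_right (j + 1) K)⟩))) *
        ((∏ j : Fin (K - k), r (K - 0 - (K - k) + (j : ℕ))
            ((Fin.cons a y : Fin (K - k + 1) → Fin d → ℝ) j.castSucc)
            ((Fin.cons a y : Fin (K - k + 1) → Fin d → ℝ) j.succ)) *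
          backward K r φK 0 ((Fin.cons a y : Fin (K - k + 1) → Fin d → ℝ) (Fin.last (K - k)))) := by
    intro y
    have h0 : glue K k x y 0 = x 0 := dif_pos (by simp)
    have hlast : glue K k x y (Fin.last K)
        = (Fin.cons a y : Fin (K - k + 1) → Fin d → ℝ) (Fin.last (K - k)) := by
      have e1 : (Fin.last K) = (⟨k + (K - k), by omega⟩ : Fin (K + 1)) := Fin.ext (by simp; omega)
      have e2 : (Fin.last (K - k)) = (⟨K - k, by omega⟩ : Fin (K - k + 1)) := Fin.ext (by simp)
      rw [e1, e2]
      exact glue_cons_eq hk x y (K - k) le_rfl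
    have hkk : K - 0 - (K - k) = k := by omega
    -- the ℕ-indexed factor function
    set gl : ℕ → Fin d → ℝ := fun i => glue K k x y ⟨min i K, by omega⟩ with hgl
    set g : ℕ → ℝ := fun i => r i (gl i) (gl (i + 1)) with hg
    have hsplit : (∏ j : Fin K, r j (glue K k x y (Fin.castSucc j)) (glue K k x y (Fin.succ j)))
        = (∏ j ∈ Finset.range k,
            r j (x ⟨min j K, Nat.lt_succ_of_le (min_le_right j K)⟩)
              (x ⟨min (j + 1) K, Nat.lt_succ_of_le (min_le_right (j + 1) K)⟩)) *
          (∏ j : Fin (K - k), r (k + (j : ℕ))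
            ((Fin.cons a y : Fin (K - k + 1) → Fin d → ℝ) j.castSucc)
            ((Fin.cons a y : Fin (K - k + 1) → Fin d → ℝ) j.succ)) := by
      have s1 : (∏ j : Fin K, r j (glue K k x y (Fin.castSucc j)) (glue K k x y (Fin.succ j)))
          = ∏ j : Fin K, g (j : ℕ) := by
        refine Finset.prod_congr rfl fun j _ => ?_
        rw [hg, hgl]
        simp only
        congr 1
        · exact congrArg _ (Fin.ext (by simp [Nat.min_eq_left (le_of_lt j.isLt)]))
        · exact congrArg _ (Fin.ext (by simp [Nat.min_eq_left j.isLt]))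
      rw [s1, Fin.prod_univ_eq_prod_range g K]
      have s2 : (∏ i ∈ Finset.range K, g i) = ∏ i ∈ Finset.range (k + (K - k)), g i := by
        rw [Nat.add_sub_cancel' hk]
      rw [s2, Finset.prod_range_add]
      congr 1
      · refine Finset.prod_congr rfl fun j hj => ?_
        have hjk : j < k := Finset.mem_range.mp hj
        rw [hg, hgl]
        simp only
        have e1 : glue K k x y ⟨min j K, by omega⟩
            = x ⟨min j K, by omega⟩ := dif_pos (by simp; omega)
        have e2 : glue K k x y ⟨min (j + 1) K, by omega⟩
            = x ⟨min (j + 1) K, by omega⟩ := dif_pos (by simp; omega)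
        rw [e1, e2]
      · rw [← Fin.prod_univ_eq_prod_range (fun i => g (k + i)) (K - k)]
        refine Finset.prod_congr rfl fun j _ => ?_
        rw [hg, hgl]
        simp only
        congr 1
        · have e1 : (⟨min (k + (j : ℕ)) K, by omega⟩ : Fin (K + 1))
              = ⟨k + (j : ℕ), by omega⟩ := Fin.ext (by simp; omega)
          rw [e1, glue_cons_eq hk x y (j : ℕ) (by omega)]
          exact congrArg _ (Fin.ext (by simp))
        · have e1 : (⟨min (k + (j : ℕ) + 1) K, by omega⟩ : Fin (K + 1))
              = ⟨k + ((j : ℕ) + 1), by omega⟩ := Fin.ext (by simp; omega)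
          rw [e1, glue_cons_eq hk x y ((j : ℕ) + 1) (by omega)]
          exact congrArg _ (Fin.ext (by simp))
    rw [h0, hlast, hsplit]
    simp only [hkk]
    have hb0 : backward K r φK 0 = φK := rfl
    rw [hb0]
    ring
  -- integrate
  have hfun : (fun y : Fin (K - k) → Fin d → ℝ =>
      φ0 (glue K k x y 0) *
        (∏ j : Fin K, r j (glue K k x y (Fin.castSucc j)) (glue K k x y (Fin.succ j))) *
        φK (glue K k x y (Fin.last K)) / Z)
      = fun y => (φ0 (x 0) *
          (∏ j ∈ Finset.range k,
            r j (x ⟨min j K, Nat.lt_succ_of_le (min_le_right j K)⟩)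
              (x ⟨min (j + 1) K, Nat.lt_succ_of_le (min_le_right (j + 1) K)⟩)) / Z) *
        ((∏ j : Fin (K - k), r (K - 0 - (K - k) + (j : ℕ))
            ((Fin.cons a y : Fin (K - k + 1) → Fin d → ℝ) j.castSucc)
            ((Fin.cons a y : Fin (K - k + 1) → Fin d → ℝ) j.succ)) *
          backward K r φK 0 ((Fin.cons a y : Fin (K - k + 1) → Fin d → ℝ) (Fin.last (K - k)))) := by
    funext y
    rw [hpt y]
    ring
  rw [hfun, integral_const_mul, key.2]
  have : K - k + 0 = K - k := by omega
  rw [this]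
  ring

/-- **The optimal coupling is a Markov chain with Doob transition kernel.** For
`p*(x_0,…,x_K) = φ_0(x_0) (∏_{j<K} r_j(x_j,x_{j+1})) φ_K(x_K) / Z` with `Z ∈ (0,∞)` the
total integral, and with the backward potentials `φ⁻_k` assumed finite and strictly
positive everywhere, the conditional density `p*_{0:k+1}(x_0,…,x_{k+1}) / p*_{0:k}(x_0,…,x_k)`
(where `p*_{0:k}` is the marginal of `p*` on `(x_0,…,x_k)`) equals
`r_k(x_k, x_{k+1}) φ⁻_{k+1}(x_{k+1}) / φ⁻_k(x_k)`; in particular it depends only on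
`(x_k, x_{k+1})`, so `p*` is a Markov chain with this transition kernel. -/
theorem optimal_coupling_markov_transition_kernel
    {d K : ℕ}
    (r : ℕ → (Fin d → ℝ) → (Fin d → ℝ) → ℝ)
    (φ0 φK : (Fin d → ℝ) → ℝ)
    (hr : ∀ j, Measurable (Function.uncurry (r j)))
    (hrpos : ∀ j x y, 0 < r j x y)
    (hφ0 : Measurable φ0) (hφ0pos : ∀ u, 0 < φ0 u)
    (hφK : Measurable φK) (hφKpos : ∀ u, 0 < φK u)
    (hfin : ∀ (j : ℕ) (x : Fin d → ℝ),
      Integrable (fun y => r (K - (j + 1)) x y * backward K r φK j y))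
    (hbackpos : ∀ (j : ℕ) (x : Fin d → ℝ), 0 < backward K r φK j x)
    (Z : ℝ)
    (hZ : Z = ∫ x : Fin (K + 1) → Fin d → ℝ,
      φ0 (x 0) * (∏ j : Fin K, r j (x (Fin.castSucc j)) (x (Fin.succ j))) *
        φK (x (Fin.last K)))
    (hZint : Integrable (fun x : Fin (K + 1) → Fin d → ℝ =>
      φ0 (x 0) * (∏ j : Fin K, r j (x (Fin.castSucc j)) (x (Fin.succ j))) *
        φK (x (Fin.last K))))
    (hZpos : 0 < Z)
    (pstar : (Fin (K + 1) → Fin d → ℝ) → ℝ)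
    (hpstar : pstar = fun x =>
      φ0 (x 0) * (∏ j : Fin K, r j (x (Fin.castSucc j)) (x (Fin.succ j))) *
        φK (x (Fin.last K)) / Z) :
    ∀ (k : ℕ) (hk : k < K) (x : Fin (K + 1) → Fin d → ℝ),
      (∫ y : Fin (K - (k + 1)) → Fin d → ℝ, pstar (glue K (k + 1) x y)) /
          (∫ y : Fin (K - k) → Fin d → ℝ, pstar (glue K k x y)) =
        r k (x ⟨k, by omega⟩) (x ⟨k + 1, by omega⟩) *
          backward K r φK (K - (k + 1)) (x ⟨k + 1, by omega⟩) /
          backward K r φK (K - k) (x ⟨k, by omega⟩) := by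
  intro k hk x
  simp only [hpstar]
  rw [marginal_eq r φ0 φK hr hrpos hφK hfin hbackpos Z (k + 1) (by omega) x,
    marginal_eq r φ0 φK hr hrpos hφK hfin hbackpos Z k (by omega) x]
  simp only [Finset.prod_range_succ]
  have e1 : (⟨min k K, Nat.lt_succ_of_le (min_le_right k K)⟩ : Fin (K + 1))
      = ⟨k, by omega⟩ := Fin.ext (by simp [Nat.min_eq_left (le_of_lt hk)])
  have e2 : (⟨min (k + 1) K, Nat.lt_succ_of_le (min_le_right (k + 1) K)⟩ : Fin (K + 1))
      = ⟨k + 1, by omega⟩ := Fin.ext (by simp [Nat.min_eq_left hk])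
  rw [e1, e2]
  have hPpos : (0 : ℝ) < ∏ j ∈ Finset.range k,
      r j (x ⟨min j K, Nat.lt_succ_of_le (min_le_right j K)⟩)
        (x ⟨min (j + 1) K, Nat.lt_succ_of_le (min_le_right (j + 1) K)⟩) :=
    Finset.prod_pos fun j _ => hrpos _ _ _
  have h1 := (hφ0pos (x 0)).ne'
  have h2 := hPpos.ne'
  have h3 := (hbackpos (K - k) (x ⟨k, by omega⟩)).ne'
  have h4 := (hbackpos (K - (k + 1)) (x ⟨k + 1, by omega⟩)).ne'
  have h5 := hZpos.ne'
  have h6 := (hrpos k (x ⟨k, by omega⟩) (x ⟨k + 1, by omega⟩)).ne'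
  field_simp
end

section
/- Let ε > 0, x* ∈ ℝ^d, let Q, R be symmetric positive definite d×d real matrices, and define the LQR transition cost ℓ(x, y) := ½ (x − x*)ᵀ Q (x − x*) + ½ (y − x)ᵀ R (y − x). Let α ∈ ℝ^d and let P be a symmetric positive definite d×d matrix. Set P⁻ := Q/ε + (ε R⁻¹ + P⁻¹)⁻¹ and α⁻ := (P⁻)⁻¹ ( (Q/ε) x* + (ε R⁻¹ + P⁻¹)⁻¹ α ). Then P⁻ is symmetric positive definite and there exists a constant c > 0, independent of x, such that for all x ∈ ℝ^d, ∫_{ℝ^d} exp(−ℓ(x, y)/ε) · N(y | α, P⁻¹) dy = c · N(x | α⁻, (P⁻)⁻¹). -/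
open MeasureTheory Matrix

section Helpers

open scoped MatrixOrder

lemma integral_comp_mulVec' {d : ℕ} (M : Matrix (Fin d) (Fin d) ℝ) (hM : IsUnit M.det)
    (f : (Fin d → ℝ) → ℝ) :
    ∫ x : Fin d → ℝ, f (M *ᵥ x) = |M.det|⁻¹ * ∫ x, f x := by
  have hinv : Invertible M := M.invertibleOfIsUnitDet hM
  let e : (Fin d → ℝ) ≃ₗ[ℝ] (Fin d → ℝ) := M.toLinearEquiv' hinv
  let e' : (Fin d → ℝ) ≃L[ℝ] (Fin d → ℝ) := e.toContinuousLinearEquiv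
  have hdet : LinearMap.det (Matrix.toLin' M) = M.det := LinearMap.det_toLin' M
  have hmap : Measure.map (⇑(Matrix.toLin' M)) (volume : Measure (Fin d → ℝ))
      = ENNReal.ofReal |M.det|⁻¹ • volume := by
    have := Measure.map_linearMap_addHaar_pi_eq_smul_addHaar
      (f := Matrix.toLin' M) (by rw [hdet]; exact hM.ne_zero) (volume : Measure (Fin d → ℝ))
    rw [hdet, abs_inv] at this
    exact this
  have hco : (⇑(e'.toHomeomorph.toMeasurableEquiv) : (Fin d → ℝ) → (Fin d → ℝ))
      = ⇑(Matrix.toLin' M) := rfl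
  have h1 : ∫ y, f y ∂(Measure.map (⇑(Matrix.toLin' M)) volume)
      = ∫ x, f (M *ᵥ x) := by
    rw [← hco, MeasureTheory.integral_map_equiv]
    congr 1
  rw [← h1, hmap, integral_smul_measure]
  rw [ENNReal.toReal_ofReal (by positivity)]
  simp [smul_eq_mul]

lemma integral_gauss_pd {d : ℕ} (S : Matrix (Fin d) (Fin d) ℝ) (hS : S.PosDef) (m : Fin d → ℝ) :
    ∫ y : Fin d → ℝ, Real.exp (-(1/2) * ((y - m) ⬝ᵥ (S *ᵥ (y - m)))) =
      (2 * Real.pi) ^ ((d : ℝ) / 2) * S.det ^ (-(1 : ℝ) / 2) := by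
  have h0 : (∫ y : Fin d → ℝ, Real.exp (-(1/2) * ((y - m) ⬝ᵥ (S *ᵥ (y - m)))))
      = ∫ y : Fin d → ℝ, Real.exp (-(1/2) * (y ⬝ᵥ (S *ᵥ y))) :=
    integral_sub_right_eq_self (fun y => Real.exp (-(1/2) * (y ⬝ᵥ (S *ᵥ y)))) m
  set T := CFC.sqrt S with hTdef
  have hTT : T * T = S := CFC.sqrt_mul_sqrt_self S hS.posSemidef.nonneg
  have hTsym : Tᵀ = T := by
    have := (CFC.sqrt_nonneg S).posSemidef.1
    rwa [IsHermitian, conjTranspose_eq_transpose_of_trivial] at this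
  have hdetS : 0 < S.det := hS.det_pos
  have hdetT2 : T.det * T.det = S.det := by rw [← det_mul, hTT]
  have hdetT : T.det ≠ 0 := by
    intro h; rw [h, zero_mul] at hdetT2; exact hdetS.ne hdetT2
  have hTunit : IsUnit T.det := isUnit_iff_ne_zero.mpr hdetT
  have hdetTinv : T⁻¹.det = T.det⁻¹ := by
    rw [det_nonsing_inv, Ring.inverse_eq_inv']
  have hTinv_unit : IsUnit T⁻¹.det := by
    rw [hdetTinv]; exact isUnit_iff_ne_zero.mpr (inv_ne_zero hdetT)
  have h1 := integral_comp_mulVec' T⁻¹ hTinv_unit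
      (fun y => Real.exp (-(1/2) * (y ⬝ᵥ (S *ᵥ y))))
  have h2 : ∀ x : Fin d → ℝ, (T⁻¹ *ᵥ x) ⬝ᵥ (S *ᵥ (T⁻¹ *ᵥ x)) = x ⬝ᵥ x := by
    intro x
    have e1 : S *ᵥ (T⁻¹ *ᵥ x) = T *ᵥ x := by
      rw [mulVec_mulVec, ← hTT, Matrix.mul_assoc, Matrix.mul_nonsing_inv _ hTunit,
        Matrix.mul_one]
    rw [e1, dotProduct_mulVec, ← Matrix.mulVec_transpose, mulVec_mulVec, hTsym,
      Matrix.mul_nonsing_inv _ hTunit, one_mulVec]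
  simp only [h2] at h1
  have h3 : (∫ x : Fin d → ℝ, Real.exp (-(1/2) * (x ⬝ᵥ x)))
      = (2 * Real.pi) ^ ((d : ℝ) / 2) := by
    have hprod : ∀ x : Fin d → ℝ, Real.exp (-(1/2) * (x ⬝ᵥ x))
        = ∏ i, Real.exp (-(1/2) * (x i) ^ 2) := by
      intro x
      rw [← Real.exp_sum]
      congr 1
      rw [dotProduct, Finset.mul_sum]
      congr 1; ext i; ring
    simp only [hprod]
    rw [MeasureTheory.integral_fintype_prod_volume_eq_pow (ι := Fin d)
      (f := fun t : ℝ => Real.exp (-(1/2) * t ^ 2))]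
    have hg : (∫ t : ℝ, Real.exp (-(1/2) * t ^ 2)) = Real.sqrt (Real.pi / (1/2)) := by
      simpa using integral_gaussian (1/2)
    rw [hg, show Real.pi / (1/2) = 2 * Real.pi by ring]
    rw [Real.sqrt_eq_rpow, Fintype.card_fin,
      ← Real.rpow_natCast ((2*Real.pi) ^ ((1:ℝ)/2)) d,
      ← Real.rpow_mul (by positivity)]
    norm_num
    ring_nf
  have habs : |T.det| = S.det ^ ((1:ℝ)/2) := by
    rw [← Real.sqrt_eq_rpow, ← hdetT2, ← sq, Real.sqrt_sq_eq_abs]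
  have hfin : S.det ^ (-(1:ℝ)/2) = (S.det ^ ((1:ℝ)/2))⁻¹ := by
    rw [show -(1:ℝ)/2 = -((1:ℝ)/2) by ring, Real.rpow_neg hdetS.le]
  rw [h3] at h1
  rw [h0, hfin, ← habs]
  rw [hdetTinv, abs_inv, inv_inv] at h1
  have habsne : |T.det| ≠ 0 := by positivity
  field_simp at h1 ⊢
  linarith [h1]

lemma dot_symm {d : ℕ} (C : Matrix (Fin d) (Fin d) ℝ) (hC : Cᵀ = C) (u v : Fin d → ℝ) :
    u ⬝ᵥ (C *ᵥ v) = v ⬝ᵥ (C *ᵥ u) := by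
  rw [dotProduct_mulVec, ← Matrix.mulVec_transpose, hC, dotProduct_comm]

lemma quad_combine {d : ℕ} (M N : Matrix (Fin d) (Fin d) ℝ) (hM : Mᵀ = M) (hN : Nᵀ = N)
    (h : IsUnit (M + N).det) (a b z : Fin d → ℝ) :
    (z - a) ⬝ᵥ (M *ᵥ (z - a)) + (z - b) ⬝ᵥ (N *ᵥ (z - b)) =
      (z - (M + N)⁻¹ *ᵥ (M *ᵥ a + N *ᵥ b)) ⬝ᵥ
          ((M + N) *ᵥ (z - (M + N)⁻¹ *ᵥ (M *ᵥ a + N *ᵥ b))) +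
        (a ⬝ᵥ (M *ᵥ a) + b ⬝ᵥ (N *ᵥ b) -
          (M *ᵥ a + N *ᵥ b) ⬝ᵥ ((M + N)⁻¹ *ᵥ (M *ᵥ a + N *ᵥ b))) := by
  set w : Fin d → ℝ := M *ᵥ a + N *ᵥ b with hw
  set mm : Fin d → ℝ := (M + N)⁻¹ *ᵥ w with hmm
  have key1 : (M + N) *ᵥ mm = w := by
    rw [hmm, mulVec_mulVec, Matrix.mul_nonsing_inv _ h, one_mulVec]
  have hMN : (M + N)ᵀ = M + N := by rw [transpose_add, hM, hN]
  have e1 : (z - mm) ⬝ᵥ ((M + N) *ᵥ (z - mm))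
      = z ⬝ᵥ ((M+N) *ᵥ z) - 2 * (z ⬝ᵥ w) + mm ⬝ᵥ w := by
    rw [mulVec_sub, key1, dotProduct_sub, sub_dotProduct, sub_dotProduct,
      dot_symm _ hMN mm z, key1]
    ring
  have e2 : z ⬝ᵥ ((M+N) *ᵥ z) = z ⬝ᵥ (M *ᵥ z) + z ⬝ᵥ (N *ᵥ z) := by
    rw [add_mulVec, dotProduct_add]
  have e3 : z ⬝ᵥ w = z ⬝ᵥ (M *ᵥ a) + z ⬝ᵥ (N *ᵥ b) := by
    rw [hw, dotProduct_add]
  have e4 : mm ⬝ᵥ w = w ⬝ᵥ ((M+N)⁻¹ *ᵥ w) := by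
    rw [hmm, dotProduct_comm]
  rw [e1, e2, e3, e4, sub_dotProduct, sub_dotProduct,
    mulVec_sub, mulVec_sub, dotProduct_sub, dotProduct_sub, dotProduct_sub, dotProduct_sub,
    dot_symm _ hM a z, dot_symm _ hN b z, dotProduct_comm w mm, e4]
  ring

lemma dot_mul_left {d : ℕ} (A : Matrix (Fin d) (Fin d) ℝ) (u v : Fin d → ℝ) :
    (A *ᵥ u) ⬝ᵥ v = u ⬝ᵥ (Aᵀ *ᵥ v) := by
  rw [dotProduct_comm, dotProduct_mulVec, ← Matrix.mulVec_transpose, dotProduct_comm]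

lemma dot_transpose {d : ℕ} (C : Matrix (Fin d) (Fin d) ℝ) (u v : Fin d → ℝ) :
    u ⬝ᵥ (C *ᵥ v) = v ⬝ᵥ (Cᵀ *ᵥ u) := by
  rw [dotProduct_mulVec, ← Matrix.mulVec_transpose, dotProduct_comm]

lemma rem_eq {d : ℕ} (A P B : Matrix (Fin d) (Fin d) ℝ)
    (hAs : Aᵀ = A) (hPs : Pᵀ = P) (hSs : ((A + P)⁻¹)ᵀ = (A + P)⁻¹)
    (hB1 : A - A * (A + P)⁻¹ * A = B) (hB2 : A * (A + P)⁻¹ * P = B)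
    (hB3 : P * (A + P)⁻¹ * A = B)
    (hB4 : P - P * (A + P)⁻¹ * P = B) (x α : Fin d → ℝ) :
    x ⬝ᵥ (A *ᵥ x) + α ⬝ᵥ (P *ᵥ α) -
        (A *ᵥ x + P *ᵥ α) ⬝ᵥ ((A + P)⁻¹ *ᵥ (A *ᵥ x + P *ᵥ α)) =
      (x - α) ⬝ᵥ (B *ᵥ (x - α)) := by
  have hBs : Bᵀ = B := by
    rw [← hB2, transpose_mul, transpose_mul, hAs, hPs, hSs, ← Matrix.mul_assoc, hB3, hB2]
  have hB1' : A * (A + P)⁻¹ * A = A - B := by rw [← hB1]; abel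
  have hB4' : P * (A + P)⁻¹ * P = P - B := by rw [← hB4]; abel
  have t11 : (A *ᵥ x) ⬝ᵥ ((A + P)⁻¹ *ᵥ (A *ᵥ x)) = x ⬝ᵥ ((A - B) *ᵥ x) := by
    rw [dot_mul_left, hAs, mulVec_mulVec, mulVec_mulVec, hB1']
  have t12 : (A *ᵥ x) ⬝ᵥ ((A + P)⁻¹ *ᵥ (P *ᵥ α)) = x ⬝ᵥ (B *ᵥ α) := by
    rw [dot_mul_left, hAs, mulVec_mulVec, mulVec_mulVec, hB2]
  have t21 : (P *ᵥ α) ⬝ᵥ ((A + P)⁻¹ *ᵥ (A *ᵥ x)) = x ⬝ᵥ (B *ᵥ α) := by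
    rw [dot_mul_left, hPs, mulVec_mulVec, mulVec_mulVec, hB3,
      dot_transpose, hBs]
  have t22 : (P *ᵥ α) ⬝ᵥ ((A + P)⁻¹ *ᵥ (P *ᵥ α)) = α ⬝ᵥ ((P - B) *ᵥ α) := by
    rw [dot_mul_left, hPs, mulVec_mulVec, mulVec_mulVec, hB4']
  rw [mulVec_add, dotProduct_add, add_dotProduct, add_dotProduct, t11, t12, t21, t22,
    sub_dotProduct, mulVec_sub, dotProduct_sub, dotProduct_sub,
    dot_symm _ hBs α x, sub_mulVec, sub_mulVec, dotProduct_sub, dotProduct_sub]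
  ring

lemma posDef_smul' {d : ℕ} {M : Matrix (Fin d) (Fin d) ℝ} (hM : M.PosDef) {c : ℝ}
    (hc : 0 < c) : (c • M).PosDef := by
  refine PosDef.of_dotProduct_mulVec_pos ?_ (fun x hx => ?_)
  · have h1 := hM.1
    rw [IsHermitian, conjTranspose_eq_transpose_of_trivial] at h1 ⊢
    rw [transpose_smul, h1]
  · rw [smul_mulVec, dotProduct_smul, smul_eq_mul]
    exact mul_pos hc (hM.dotProduct_mulVec_pos hx)

lemma pd_symm {d : ℕ} {M : Matrix (Fin d) (Fin d) ℝ} (hM : M.PosDef) : Mᵀ = M := by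
  have := hM.1
  rwa [IsHermitian, conjTranspose_eq_transpose_of_trivial] at this

end Helpers

/-- The Gaussian density `N(x|μ,Σ) = (2π)^{-d/2} (det Σ)^{-1/2} exp(-½ (x-μ)ᵀ Σ⁻¹ (x-μ))`
on `ℝ^d`. -/
noncomputable def gaussPDF (d : ℕ) (m : Fin d → ℝ) (S : Matrix (Fin d) (Fin d) ℝ)
    (x : Fin d → ℝ) : ℝ :=
  (2 * Real.pi) ^ (-(d : ℝ) / 2) * S.det ^ (-(1 : ℝ) / 2) *
    Real.exp (-(1 / 2) * ((x - m) ⬝ᵥ (S⁻¹ *ᵥ (x - m))))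

/-- The LQR transition cost
`ℓ(x, y) := ½ (x − x*)ᵀ Q (x − x*) + ½ (y − x)ᵀ R (y − x)`. -/
noncomputable def lqrCost {d : ℕ} (xs : Fin d → ℝ) (Q R : Matrix (Fin d) (Fin d) ℝ)
    (x y : Fin d → ℝ) : ℝ :=
  (1 / 2) * ((x - xs) ⬝ᵥ (Q *ᵥ (x - xs))) + (1 / 2) * ((y - x) ⬝ᵥ (R *ᵥ (y - x)))

/-- **Backward propagation of a Gaussian potential through the LQR kernel.** For `ε > 0`,
`x* ∈ ℝ^d`, symmetric positive definite `Q, R`, a mean `α` and a symmetric positive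
definite precision `P`, set `P⁻ := Q/ε + (ε R⁻¹ + P⁻¹)⁻¹` and
`α⁻ := (P⁻)⁻¹((Q/ε) x* + (ε R⁻¹ + P⁻¹)⁻¹ α)`. Then `P⁻` is symmetric positive definite
and there is a constant `c > 0`, independent of `x`, with
`∫ exp(−ℓ(x,y)/ε) N(y|α, P⁻¹) dy = c · N(x|α⁻, (P⁻)⁻¹)` for all `x`. -/
theorem backward_gaussian_potential_propagation
    {d : ℕ} (ε : ℝ) (hε : 0 < ε) (xs α : Fin d → ℝ)
    (Q R P : Matrix (Fin d) (Fin d) ℝ)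
    (hQ : Q.PosDef) (hR : R.PosDef) (hP : P.PosDef) :
    (ε⁻¹ • Q + (ε • R⁻¹ + P⁻¹)⁻¹).PosDef ∧
      ∃ c : ℝ, 0 < c ∧
        ∀ x : Fin d → ℝ,
          (∫ y : Fin d → ℝ,
              Real.exp (-(lqrCost xs Q R x y) / ε) * gaussPDF d α P⁻¹ y) =
            c * gaussPDF d
              ((ε⁻¹ • Q + (ε • R⁻¹ + P⁻¹)⁻¹)⁻¹ *ᵥ
                ((ε⁻¹ • Q) *ᵥ xs + (ε • R⁻¹ + P⁻¹)⁻¹ *ᵥ α))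
              ((ε⁻¹ • Q + (ε • R⁻¹ + P⁻¹)⁻¹)⁻¹) x := by
  have hεinv : (0:ℝ) < ε⁻¹ := inv_pos.mpr hε
  set G : Matrix (Fin d) (Fin d) ℝ := ε⁻¹ • Q with hGdef
  set A : Matrix (Fin d) (Fin d) ℝ := ε⁻¹ • R with hAdef
  set S : Matrix (Fin d) (Fin d) ℝ := A + P with hSdef
  set B : Matrix (Fin d) (Fin d) ℝ := (ε • R⁻¹ + P⁻¹)⁻¹ with hBdef
  -- positive definiteness
  have hGpd : G.PosDef := posDef_smul' hQ hεinv
  have hApd : A.PosDef := posDef_smul' hR hεinv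
  have hSpd : S.PosDef := hApd.add hP
  have hsum_pd : (ε • R⁻¹ + P⁻¹).PosDef := (posDef_smul' hR.inv hε).add hP.inv
  have hBpd : B.PosDef := hsum_pd.inv
  have hPmpd : (G + B).PosDef := hGpd.add hBpd
  refine ⟨hPmpd, ?_⟩
  set Pm : Matrix (Fin d) (Fin d) ℝ := G + B with hPmdef
  -- determinant units
  have hAunit : IsUnit A.det := isUnit_iff_ne_zero.mpr hApd.det_pos.ne'
  have hPunit : IsUnit P.det := isUnit_iff_ne_zero.mpr hP.det_pos.ne'
  have hRunit : IsUnit R.det := isUnit_iff_ne_zero.mpr hR.det_pos.ne'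
  have hSunit : IsUnit S.det := isUnit_iff_ne_zero.mpr hSpd.det_pos.ne'
  have hPmunit : IsUnit Pm.det := isUnit_iff_ne_zero.mpr hPmpd.det_pos.ne'
  -- symmetries
  have hGs : Gᵀ = G := pd_symm hGpd
  have hAs : Aᵀ = A := pd_symm hApd
  have hPs : Pᵀ = P := pd_symm hP
  have hBs : Bᵀ = B := pd_symm hBpd
  have hSinvs : (S⁻¹)ᵀ = S⁻¹ := by
    rw [transpose_nonsing_inv, pd_symm hSpd]
  -- matrix identities
  have hAinv : A⁻¹ = ε • R⁻¹ := by
    apply Matrix.inv_eq_right_inv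
    rw [hAdef, Matrix.smul_mul, Matrix.mul_smul, smul_smul, inv_mul_cancel₀ hε.ne',
      Matrix.mul_nonsing_inv _ hRunit, one_smul]
  have hkey : ε • R⁻¹ + P⁻¹ = A⁻¹ * S * P⁻¹ := by
    rw [hSdef, Matrix.mul_add, Matrix.nonsing_inv_mul _ hAunit, Matrix.add_mul,
      Matrix.one_mul, Matrix.mul_assoc, Matrix.mul_nonsing_inv _ hPunit, Matrix.mul_one,
      hAinv, add_comm]
  have hkey' : ε • R⁻¹ + P⁻¹ = P⁻¹ * S * A⁻¹ := by
    rw [hSdef, Matrix.mul_add, Matrix.nonsing_inv_mul _ hPunit, Matrix.add_mul,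
      Matrix.one_mul, Matrix.mul_assoc, Matrix.mul_nonsing_inv _ hAunit, Matrix.mul_one,
      hAinv]
    exact add_comm _ _
  have hB3 : P * S⁻¹ * A = B := by
    rw [hBdef, hkey, Matrix.mul_inv_rev, Matrix.mul_inv_rev,
      Matrix.nonsing_inv_nonsing_inv _ hAunit, Matrix.nonsing_inv_nonsing_inv _ hPunit,
      Matrix.mul_assoc]
  have hB2 : A * S⁻¹ * P = B := by
    rw [hBdef, hkey', Matrix.mul_inv_rev, Matrix.mul_inv_rev,
      Matrix.nonsing_inv_nonsing_inv _ hAunit, Matrix.nonsing_inv_nonsing_inv _ hPunit,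
      Matrix.mul_assoc]
  have hB1 : A - A * S⁻¹ * A = B := by
    have h1 : A * S⁻¹ * S = A := by
      rw [Matrix.mul_assoc, Matrix.nonsing_inv_mul _ hSunit, Matrix.mul_one]
    calc A - A * S⁻¹ * A = A * S⁻¹ * S - A * S⁻¹ * A := by rw [h1]
      _ = A * S⁻¹ * (S - A) := by rw [Matrix.mul_sub]
      _ = A * S⁻¹ * P := by rw [hSdef, add_sub_cancel_left]
      _ = B := hB2
  have hB4 : P - P * S⁻¹ * P = B := by
    have h1 : P * S⁻¹ * S = P := by
      rw [Matrix.mul_assoc, Matrix.nonsing_inv_mul _ hSunit, Matrix.mul_one]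
    calc P - P * S⁻¹ * P = P * S⁻¹ * S - P * S⁻¹ * P := by rw [h1]
      _ = P * S⁻¹ * (S - P) := by rw [Matrix.mul_sub]
      _ = P * S⁻¹ * A := by rw [hSdef, add_sub_cancel_right]
      _ = B := hB3
  -- completing the square, y-part
  set w : Fin d → ℝ := G *ᵥ xs + B *ᵥ α with hwdef
  set αm : Fin d → ℝ := Pm⁻¹ *ᵥ w with hαmdef
  set k : ℝ := (1/2) * (xs ⬝ᵥ (G *ᵥ xs) + α ⬝ᵥ (B *ᵥ α) - w ⬝ᵥ (Pm⁻¹ *ᵥ w)) with hkdef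
  have claim1 : ∀ x y : Fin d → ℝ,
      (y - x) ⬝ᵥ (A *ᵥ (y - x)) + (y - α) ⬝ᵥ (P *ᵥ (y - α)) =
        (y - S⁻¹ *ᵥ (A *ᵥ x + P *ᵥ α)) ⬝ᵥ (S *ᵥ (y - S⁻¹ *ᵥ (A *ᵥ x + P *ᵥ α))) +
          (x - α) ⬝ᵥ (B *ᵥ (x - α)) := by
    intro x y
    have h := quad_combine A P hAs hPs (by rw [← hSdef]; exact hSunit) x α y
    rw [rem_eq A P B hAs hPs (by rw [← hSdef]; exact hSinvs) (by rw [← hSdef]; exact hB1)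
      (by rw [← hSdef]; exact hB2) (by rw [← hSdef]; exact hB3)
      (by rw [← hSdef]; exact hB4) x α] at h
    rw [← hSdef] at h
    exact h
  have claim2 : ∀ x : Fin d → ℝ,
      (x - xs) ⬝ᵥ (G *ᵥ (x - xs)) + (x - α) ⬝ᵥ (B *ᵥ (x - α)) =
        (x - αm) ⬝ᵥ (Pm *ᵥ (x - αm)) + 2 * k := by
    intro x
    have h := quad_combine G B hGs hBs (by rw [← hPmdef]; exact hPmunit) xs α x
    rw [← hPmdef, ← hwdef, ← hαmdef] at h
    rw [h, hkdef]
    ring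
  -- the exponent identity
  have hexp : ∀ x y : Fin d → ℝ,
      (-(1/2) * ((y - α) ⬝ᵥ (P *ᵥ (y - α)))) + -(lqrCost xs Q R x y) / ε =
        (-(1/2) * ((x - αm) ⬝ᵥ (Pm *ᵥ (x - αm))) + -k) +
          (-(1/2) * ((y - S⁻¹ *ᵥ (A *ᵥ x + P *ᵥ α)) ⬝ᵥ
            (S *ᵥ (y - S⁻¹ *ᵥ (A *ᵥ x + P *ᵥ α))))) := by
    intro x y
    have hsc1 : (x - xs) ⬝ᵥ (G *ᵥ (x - xs)) = ε⁻¹ * ((x - xs) ⬝ᵥ (Q *ᵥ (x - xs))) := by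
      rw [hGdef, smul_mulVec, dotProduct_smul, smul_eq_mul]
    have hsc2 : (y - x) ⬝ᵥ (A *ᵥ (y - x)) = ε⁻¹ * ((y - x) ⬝ᵥ (R *ᵥ (y - x))) := by
      rw [hAdef, smul_mulVec, dotProduct_smul, smul_eq_mul]
    have hlqr : -(lqrCost xs Q R x y) / ε =
        -(1/2) * ((x - xs) ⬝ᵥ (G *ᵥ (x - xs))) - (1/2) * ((y - x) ⬝ᵥ (A *ᵥ (y - x))) := by
      rw [lqrCost, hsc1, hsc2]
      field_simp
      ring
    have h1 := claim1 x y
    have h2 := claim2 x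
    rw [hlqr]
    linarith [h1, h2]
  -- constants
  have hdPinv : (0:ℝ) < (P⁻¹).det := hP.inv.det_pos
  have hdPminv : (0:ℝ) < (Pm⁻¹).det := hPmpd.inv.det_pos
  have hdS : (0:ℝ) < S.det := hSpd.det_pos
  set c0 : ℝ := (2 * Real.pi) ^ (-(d : ℝ) / 2) * (P⁻¹).det ^ (-(1:ℝ)/2) with hc0def
  set IS : ℝ := (2 * Real.pi) ^ ((d : ℝ) / 2) * S.det ^ (-(1:ℝ)/2) with hISdef
  set cR : ℝ := (2 * Real.pi) ^ (-(d : ℝ) / 2) * (Pm⁻¹).det ^ (-(1:ℝ)/2) with hcRdef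
  have hpi : (0:ℝ) < 2 * Real.pi := by positivity
  have hc0 : 0 < c0 := by rw [hc0def]; positivity
  have hIS : 0 < IS := by rw [hISdef]; positivity
  have hcR : 0 < cR := by rw [hcRdef]; positivity
  refine ⟨Real.exp (-k) * c0 * IS / cR, by positivity, fun x => ?_⟩
  -- rewrite the integrand
  have hPinvinv : (P⁻¹)⁻¹ = P := Matrix.nonsing_inv_nonsing_inv _ hPunit
  have hPminvinv : (Pm⁻¹)⁻¹ = Pm := Matrix.nonsing_inv_nonsing_inv _ hPmunit
  have hintegrand : ∀ y : Fin d → ℝ,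
      Real.exp (-(lqrCost xs Q R x y) / ε) * gaussPDF d α P⁻¹ y =
        (c0 * Real.exp (-(1/2) * ((x - αm) ⬝ᵥ (Pm *ᵥ (x - αm))) + -k)) *
          Real.exp (-(1/2) * ((y - S⁻¹ *ᵥ (A *ᵥ x + P *ᵥ α)) ⬝ᵥ
            (S *ᵥ (y - S⁻¹ *ᵥ (A *ᵥ x + P *ᵥ α))))) := by
    intro y
    rw [gaussPDF, hPinvinv, ← hc0def]
    rw [mul_comm, mul_assoc, ← Real.exp_add, hexp x y, Real.exp_add, ← mul_assoc]
  simp only [hintegrand]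
  rw [MeasureTheory.integral_const_mul]
  rw [integral_gauss_pd S hSpd (S⁻¹ *ᵥ (A *ᵥ x + P *ᵥ α)), ← hISdef]
  -- right-hand side
  rw [gaussPDF, hPminvinv]
  rw [← hcRdef]
  rw [Real.exp_add]
  field_simp
end
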